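/- arXiv:2411.11133 — 12 statements merged into one kernel-verified Lean document; each statement's English description precedes it below -/
import Mathlib

section
/- A permutation π of {1,…,n} admits an interval representation using at most 2 distinct interval lengths if and only if π has no strictly decreasing subsequence of length 3 (that is, π has depth at most 2). -/
/-- An interval representation of a permutation `π` of `{1,…,n}`: intervals
`[ℓ j, r j]` with integer endpoints such that the left endpoints, in the order
given by `π`, are strictly increasing, all left endpoints precede all right
endpoints, and the right endpoints are strictly increasing in natural order. -/
def IsIntervalRep {n : ℕ} (π : Equiv.Perm (Fin n)) (ℓ r : Fin n → ℤ) : Prop :=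
  (∀ i j : Fin n, i < j → ℓ (π i) < ℓ (π j)) ∧
  (∀ i j : Fin n, ℓ i < r j) ∧
  (∀ i j : Fin n, i < j → r i < r j)

/-- `v` is a left-to-right maximum value: every larger value occurs at a later
position. -/
def TCIsMax {n : ℕ} (π : Equiv.Perm (Fin n)) (v : Fin n) : Prop :=
  ∀ u, v < u → π.symm v < π.symm u

/-- A "P-pair": a non-maximum `c` positioned before a maximum `d` with `c < d`. -/
def TCPPair {n : ℕ} (π : Equiv.Perm (Fin n)) (c d : Fin n) : Prop :=
  c < d ∧ ¬ TCIsMax π c ∧ TCIsMax π d ∧ π.symm c < π.symm d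

/-- The value interval `[b, a]` contains no P-pair. -/
def TCPFree {n : ℕ} (π : Equiv.Perm (Fin n)) (b a : Fin n) : Prop :=
  ∀ c d : Fin n, b ≤ c → d ≤ a → ¬ TCPPair π c d

theorem tc_key : ∀ (n : ℕ) (π : Equiv.Perm (Fin n)), ∃ (R : Fin n → ℤ) (Δ : ℤ),
    2 ≤ Δ ∧ (∀ v w : Fin n, v < w → R v < R w) ∧
    (∀ c d : Fin n, TCPPair π c d → R c + Δ < R d) ∧
    (∀ b a : Fin n, b < a → TCPFree π b a → R a - R b < Δ) := by
  intro n
  induction n with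
  | zero =>
      intro π
      exact ⟨fun v => v.elim0, 2, le_refl _, fun v => v.elim0, fun c => c.elim0,
        fun b => b.elim0⟩
  | succ n ih =>
      rcases n with _ | m
      · -- Fin 1
        intro π
        refine ⟨fun _ => 0, 2, le_refl _, ?_, ?_, ?_⟩
        · intro v w h
          have h1 := v.isLt; have h2 := w.isLt; have h3 : v.val < w.val := h
          omega
        · rintro c d ⟨h, -⟩
          have h1 := c.isLt; have h2 := d.isLt; have h3 : c.val < d.val := h
          omega
        · intro b a h
          have h1 := b.isLt; have h2 := a.isLt; have h3 : b.val < a.val := h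
          omega
      · intro π
        classical
        set i0 : Fin (m + 2) := π.symm 0 with hi0
        have hne : ∀ j : Fin (m + 1), π (i0.succAbove j) ≠ 0 := by
          intro j h
          have h2 : i0.succAbove j = π.symm 0 := by
            rw [← h, Equiv.symm_apply_apply]
          exact Fin.succAbove_ne i0 j (by rw [hi0]; exact h2)
        have hinj : Function.Injective
            (fun j : Fin (m + 1) => (π (i0.succAbove j)).pred (hne j)) := by
          intro a b hab
          simp only at hab
          have h1 : π (i0.succAbove a) = π (i0.succAbove b) := by
            have h2 := congrArg Fin.succ hab
            rwa [Fin.succ_pred, Fin.succ_pred] at h2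
          exact Fin.succAbove_right_injective (π.injective h1)
        let π' : Equiv.Perm (Fin (m + 1)) :=
          Equiv.ofBijective _ (Finite.injective_iff_bijective.mp hinj)
        have hπ'app : ∀ j, π' j = (π (i0.succAbove j)).pred (hne j) := fun j => rfl
        have hsymm : ∀ v : Fin (m + 1), i0.succAbove (π'.symm v) = π.symm v.succ := by
          intro v
          have h1 : π' (π'.symm v) = v := π'.apply_symm_apply v
          rw [hπ'app] at h1
          have h2 : π (i0.succAbove (π'.symm v)) = v.succ := by
            have h3 := congrArg Fin.succ h1
            rwa [Fin.succ_pred] at h3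
          rw [← h2, Equiv.symm_apply_apply]
        have hpos : ∀ u v : Fin (m + 1),
            (π'.symm u < π'.symm v ↔ π.symm u.succ < π.symm v.succ) := by
          intro u v
          rw [← hsymm, ← hsymm]
          exact ((Fin.strictMono_succAbove i0).lt_iff_lt).symm
        have hmax : ∀ v : Fin (m + 1), TCIsMax π' v ↔ TCIsMax π v.succ := by
          intro v
          constructor
          · intro h u hu
            have hu0 : u ≠ 0 := by
              intro h0
              subst h0
              have := Fin.lt_def.mp hu
              simp at this
            have hvu : v < u.pred hu0 := by
              rw [Fin.lt_def, Fin.coe_pred]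
              have h2 := Fin.lt_def.mp hu
              rw [Fin.val_succ] at h2
              omega
            have h2 := h _ hvu
            have h3 := (hpos v (u.pred hu0)).mp h2
            rwa [Fin.succ_pred] at h3
          · intro h u hu
            exact (hpos v u).mpr (h u.succ (by rwa [Fin.succ_lt_succ_iff]))
        have hPP : ∀ c d : Fin (m + 1), TCPPair π' c d ↔ TCPPair π c.succ d.succ := by
          intro c d
          unfold TCPPair
          rw [Fin.succ_lt_succ_iff, hmax, hmax, hpos]
        obtain ⟨R', Δ', hΔ', hmono', hP', hF'⟩ := ih π'
        have hmono'le : ∀ v w : Fin (m + 1), v ≤ w → R' v ≤ R' w := by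
          intro v w h
          rcases eq_or_lt_of_le h with rfl | h
          · exact le_refl _
          · exact le_of_lt (hmono' _ _ h)
        -- value 0 is a max iff it sits at position 0
        have hmax0 : TCIsMax π 0 ↔ i0 = 0 := by
          constructor
          · intro h
            by_contra h0
            have h1 : π 0 ≠ 0 := by
              intro h2
              exact h0 (by rw [hi0, Equiv.symm_apply_eq]; exact h2.symm)
            have h2 : (0 : Fin (m + 2)) < π 0 := Fin.pos_iff_ne_zero.mpr h1
            have h3 := h (π 0) h2
            rw [Equiv.symm_apply_apply] at h3
            simp at h3
          · intro h u hu
            rw [hi0] at h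
            rw [h]
            refine Fin.pos_iff_ne_zero.mpr ?_
            intro h2
            have h3 : u = π 0 := by rw [← h2, Equiv.apply_symm_apply]
            have h4 : π 0 = 0 := by
              have h5 := congrArg π h
              rw [Equiv.apply_symm_apply] at h5
              exact h5.symm
            rw [h4] at h3
            subst h3
            exact absurd hu (lt_irrefl _)
        -- transfer of new P-free intervals
        have hSa : ∀ (a : Fin (m + 2)) (ha : a ≠ 0), TCPFree π 0 a →
            2 * R' (a.pred ha) - 2 * R' 0 + 1 < 2 * Δ' := by
          intro a ha hPF
          rcases eq_or_ne (a.pred ha) 0 with h0 | h0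
          · rw [h0]; omega
          · have hfree' : TCPFree π' 0 (a.pred ha) := by
              intro c d _ hd hpp
              have h2 := (hPP c d).mp hpp
              refine hPF c.succ d.succ (Fin.zero_le _) ?_ h2
              rw [Fin.le_def] at hd ⊢
              rw [Fin.coe_pred] at hd
              rw [Fin.val_succ]
              have := Fin.pos_iff_ne_zero.mpr ha
              have : 0 < (a : ℕ) := this
              omega
            have h1 := hF' 0 (a.pred ha) (Fin.pos_iff_ne_zero.mpr h0) hfree'
            omega
        -- choose the new leftmost gap w0
        obtain ⟨w0, hw1, hw2, hw3⟩ :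
            ∃ w0 : ℤ, 1 ≤ w0 ∧
              (∀ (d : Fin (m + 2)) (hd : d ≠ 0), ¬ TCIsMax π 0 → TCIsMax π d →
                i0 < π.symm d → 2 * Δ' < 2 * R' (d.pred hd) - 2 * R' 0 + w0) ∧
              (∀ (a : Fin (m + 2)) (ha : a ≠ 0), TCPFree π 0 a →
                2 * R' (a.pred ha) - 2 * R' 0 + w0 < 2 * Δ') := by
          by_cases hcase : ∃ d : Fin (m + 2), TCIsMax π d ∧ i0 < π.symm d ∧ ¬ TCIsMax π 0
          · obtain ⟨d0, hd0M, hd0p, h0N⟩ := hcase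
            set Ds : Finset (Fin (m + 2)) :=
              Finset.univ.filter (fun d => TCIsMax π d ∧ i0 < π.symm d) with hDs
            have hDne : Ds.Nonempty := ⟨d0, by simp [hDs, hd0M, hd0p]⟩
            set dmin := Ds.min' hDne with hdm
            have hdmem : dmin ∈ Ds := Ds.min'_mem hDne
            have hdmin_max : TCIsMax π dmin := by
              have := Finset.mem_filter.mp hdmem; exact this.2.1
            have hdmin_pos : i0 < π.symm dmin := by
              have := Finset.mem_filter.mp hdmem; exact this.2.2
            have hdmin0 : dmin ≠ 0 := by
              intro h
              rw [h, ← hi0] at hdmin_pos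
              exact lt_irrefl _ hdmin_pos
            set Sd : ℤ := 2 * R' (dmin.pred hdmin0) - 2 * R' 0 with hSd
            refine ⟨max 1 (2 * Δ' + 1 - Sd), le_max_left _ _, ?_, ?_⟩
            · intro d hd _ hMd hpd
              have hdD : d ∈ Ds := by simp [hDs, hMd, hpd]
              have hge : dmin ≤ d := Ds.min'_le d hdD
              have h5 : R' (dmin.pred hdmin0) ≤ R' (d.pred hd) := by
                refine hmono'le _ _ ?_
                rw [Fin.le_def, Fin.coe_pred, Fin.coe_pred]
                exact Nat.sub_le_sub_right hge 1
              have h6 : 2 * Δ' + 1 - Sd ≤ max 1 (2 * Δ' + 1 - Sd) := le_max_right _ _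
              rw [hSd] at h6
              omega
            · intro a ha hPF
              have hadm : a < dmin := by
                by_contra hle
                push_neg at hle
                exact hPF 0 dmin (Fin.zero_le _) hle
                  ⟨Fin.pos_iff_ne_zero.mpr hdmin0, h0N, hdmin_max, hdmin_pos⟩
              rcases max_cases 1 (2 * Δ' + 1 - Sd) with ⟨hq, _⟩ | ⟨hq, _⟩ <;> rw [hq]
              · have := hSa a ha hPF; omega
              · have h7 : R' (a.pred ha) < R' (dmin.pred hdmin0) := by
                  refine hmono' _ _ ?_
                  rw [Fin.lt_def, Fin.coe_pred, Fin.coe_pred]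
                  have h8 := Fin.lt_def.mp hadm
                  have h9 : 0 < (a : ℕ) := Fin.pos_iff_ne_zero.mpr ha
                  omega
                rw [hSd]
                omega
          · refine ⟨1, le_refl _, ?_, ?_⟩
            · intro d hd hM0 hMd hpd
              exact absurd ⟨d, hMd, hpd, hM0⟩ hcase
            · intro a ha hPF
              have := hSa a ha hPF; omega
        set R : Fin (m + 2) → ℤ :=
          Fin.cases (2 * R' 0) (fun j => 2 * R' j + w0) with hRdef
        have hR0 : R 0 = 2 * R' 0 := by simp [hRdef]
        have hRv : ∀ (v : Fin (m + 2)) (hv : v ≠ 0), R v = 2 * R' (v.pred hv) + w0 := by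
          intro v hv
          obtain rfl | ⟨j, rfl⟩ := Fin.eq_zero_or_eq_succ v
          · exact absurd rfl hv
          · simp [hRdef, Fin.pred_succ]
        refine ⟨R, 2 * Δ', by omega, ?_, ?_, ?_⟩
        · -- monotone
          intro v w hvw
          have hw : w ≠ 0 := by
            intro h
            subst h
            have := Fin.lt_def.mp hvw
            simp at this
          by_cases hv : v = 0
          · subst hv
            rw [hR0, hRv w hw]
            have h5 : R' 0 ≤ R' (w.pred hw) := hmono'le _ _ (Fin.zero_le _)
            omega
          · rw [hRv v hv, hRv w hw]
            have h5 : R' (v.pred hv) < R' (w.pred hw) := by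
              refine hmono' _ _ ?_
              rw [Fin.lt_def, Fin.coe_pred, Fin.coe_pred]
              have h6 := Fin.lt_def.mp hvw
              have h7 : 0 < (v : ℕ) := Fin.pos_iff_ne_zero.mpr hv
              omega
            omega
        · -- P pairs
          rintro c d ⟨hcd, hNc, hMd, hpcd⟩
          have hd : d ≠ 0 := by
            intro h
            subst h
            have := Fin.lt_def.mp hcd
            simp at this
          by_cases hc : c = 0
          · subst hc
            rw [hR0, hRv d hd]
            have h5 := hw2 d hd hNc hMd (by rw [hi0]; exact hpcd)
            omega
          · rw [hRv c hc, hRv d hd]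
            have hpp' : TCPPair π' (c.pred hc) (d.pred hd) := by
              rw [hPP, Fin.succ_pred, Fin.succ_pred]
              exact ⟨hcd, hNc, hMd, hpcd⟩
            have := hP' _ _ hpp'
            omega
        · -- P-free intervals
          intro b a hba hPF
          have ha : a ≠ 0 := by
            intro h
            subst h
            have := Fin.lt_def.mp hba
            simp at this
          by_cases hb : b = 0
          · subst hb
            rw [hR0, hRv a ha]
            have := hw3 a ha hPF
            omega
          · rw [hRv a ha, hRv b hb]
            have hPF' : TCPFree π' (b.pred hb) (a.pred ha) := by
              intro c d hc hd hpp
              have h2 := (hPP c d).mp hpp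
              refine hPF c.succ d.succ ?_ ?_ h2
              · rw [Fin.le_def] at hc ⊢
                rw [Fin.coe_pred] at hc
                rw [Fin.val_succ]
                have h3 : 0 < (b : ℕ) := Fin.pos_iff_ne_zero.mpr hb
                omega
              · rw [Fin.le_def] at hd ⊢
                rw [Fin.coe_pred] at hd
                rw [Fin.val_succ]
                have h3 : 0 < (a : ℕ) := Fin.pos_iff_ne_zero.mpr ha
                omega
            have h4 : b.pred hb < a.pred ha := by
              rw [Fin.lt_def, Fin.coe_pred, Fin.coe_pred]
              have h5 := Fin.lt_def.mp hba
              have h6 : 0 < (b : ℕ) := Fin.pos_iff_ne_zero.mpr hb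
              omega
            have := hF' _ _ h4 hPF'
            omega

/-- A permutation of `{1,…,n}` admits an interval representation using at most
2 distinct interval lengths iff it has no strictly decreasing subsequence of
length 3. -/
theorem two_count_iff_depth_le_two (n : ℕ) (π : Equiv.Perm (Fin n)) :
    (∃ ℓ r : Fin n → ℤ, IsIntervalRep π ℓ r ∧
      (Finset.image (fun j => r j - ℓ j) Finset.univ).card ≤ 2) ↔
    ¬ ∃ i j k : Fin n, i < j ∧ j < k ∧ π j < π i ∧ π k < π j := by
  classical
  constructor
  · rintro ⟨ℓ, r, ⟨h1, h2, h3⟩, hcard⟩ ⟨i, j, k, hij, hjk, hji, hkj⟩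
    have e1 : ℓ (π j) < ℓ (π k) := h1 j k hjk
    have e2 : r (π k) < r (π j) := h3 (π k) (π j) hkj
    have e3 : ℓ (π i) < ℓ (π j) := h1 i j hij
    have e4 : r (π j) < r (π i) := h3 (π j) (π i) hji
    set L1 := r (π k) - ℓ (π k) with hL1
    set L2 := r (π j) - ℓ (π j) with hL2
    set L3 := r (π i) - ℓ (π i) with hL3
    have hL12 : L1 < L2 := by rw [hL1, hL2]; omega
    have hL23 : L2 < L3 := by rw [hL2, hL3]; omega
    have hsub : ({L1, L2, L3} : Finset ℤ) ⊆
        Finset.image (fun j => r j - ℓ j) Finset.univ := by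
      intro x hx
      simp only [Finset.mem_insert, Finset.mem_singleton] at hx
      rcases hx with rfl | rfl | rfl
      · exact Finset.mem_image.mpr ⟨π k, Finset.mem_univ _, rfl⟩
      · exact Finset.mem_image.mpr ⟨π j, Finset.mem_univ _, rfl⟩
      · exact Finset.mem_image.mpr ⟨π i, Finset.mem_univ _, rfl⟩
    have hc3 : ({L1, L2, L3} : Finset ℤ).card = 3 := by
      rw [Finset.card_insert_of_notMem (by simp; omega),
        Finset.card_insert_of_notMem (by simp; omega), Finset.card_singleton]
    have := Finset.card_le_card hsub
    omega
  · intro H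
    obtain ⟨R, Δ, hΔ, hmono, hP, hF⟩ := tc_key n π
    set A : ℤ := Δ + 1 + 2 * ∑ v : Fin n, |R v| with hA
    refine ⟨fun v => R v - A - (if TCIsMax π v then Δ else 0), R, ⟨?_, ?_, ?_⟩, ?_⟩
    · intro i j hij
      set x := π i with hx
      set y := π j with hy
      have hpx : π.symm x = i := by rw [hx, Equiv.symm_apply_apply]
      have hpy : π.symm y = j := by rw [hy, Equiv.symm_apply_apply]
      have hpxy : π.symm x < π.symm y := by rw [hpx, hpy]; exact hij
      rcases lt_trichotomy x y with hxy | hxy | hxy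
      · by_cases hMx : TCIsMax π x <;> by_cases hMy : TCIsMax π y <;>
          simp only [hMx, hMy, if_true, if_false]
        · have := hmono x y hxy; omega
        · have := hmono x y hxy; omega
        · have := hP x y ⟨hxy, hMx, hMy, hpxy⟩; omega
        · have := hmono x y hxy; omega
      · rw [hxy] at hpxy; exact absurd hpxy (lt_irrefl _)
      · -- inversion: y < x with x positioned earlier
        have hMx : TCIsMax π x := by
          intro u hu
          by_contra hle
          push_neg at hle
          have hune : u ≠ x := ne_of_gt hu
          have hne2 : π.symm u ≠ π.symm x := fun h => hune (π.symm.injective h)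
          have hlt : π.symm u < π.symm x := lt_of_le_of_ne hle hne2
          refine H ⟨π.symm u, π.symm x, π.symm y, hlt, hpxy, ?_, ?_⟩
          · rw [Equiv.apply_symm_apply, Equiv.apply_symm_apply]; exact hu
          · rw [Equiv.apply_symm_apply, Equiv.apply_symm_apply]; exact hxy
        have hNy : ¬ TCIsMax π y := fun h =>
          absurd (h x hxy) (not_lt.mpr (le_of_lt hpxy))
        have hfree : TCPFree π y x := by
          rintro c d hyc hdx ⟨hcd, hNc, hMd, hpcd⟩
          have hpdx : π.symm d ≤ π.symm x := by
            rcases eq_or_lt_of_le hdx with rfl | h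
            · exact le_refl _
            · exact le_of_lt (hMd x h)
          have hpcy : π.symm c < π.symm y :=
            lt_of_lt_of_le hpcd (le_trans hpdx (le_of_lt hpxy))
          have hyc' : y < c := by
            rcases eq_or_lt_of_le hyc with rfl | h
            · exact absurd hpcy (lt_irrefl _)
            · exact h
          unfold TCIsMax at hNc
          push_neg at hNc
          obtain ⟨e, hce, hpe⟩ := hNc
          have hene : π.symm e ≠ π.symm c := fun h => (ne_of_gt hce) (π.symm.injective h)
          have hpec : π.symm e < π.symm c := lt_of_le_of_ne hpe hene
          refine H ⟨π.symm e, π.symm c, π.symm y, hpec, hpcy, ?_, ?_⟩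
          · rw [Equiv.apply_symm_apply, Equiv.apply_symm_apply]; exact hce
          · rw [Equiv.apply_symm_apply, Equiv.apply_symm_apply]; exact hyc'
        have := hF y x hxy hfree
        simp only [hMx, hNy, if_true, if_false]
        omega
    · intro i j
      have hub : R i ≤ ∑ v : Fin n, |R v| :=
        le_trans (le_abs_self _)
          (Finset.single_le_sum (fun v _ => abs_nonneg (R v)) (Finset.mem_univ i))
      have hlb : -(∑ v : Fin n, |R v|) ≤ R j := by
        have h5 := Finset.single_le_sum (fun v _ => abs_nonneg (R v)) (Finset.mem_univ j)
        have h6 := neg_abs_le (R j)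
        omega
      have hite : (0 : ℤ) ≤ (if TCIsMax π i then Δ else 0) := by
        split <;> omega
      have hgoal : R i - A - (if TCIsMax π i then Δ else 0) < R j := by
        rw [hA]; omega
      exact hgoal
    · exact hmono
    · have hsub : Finset.image
          (fun j => R j - (R j - A - (if TCIsMax π j then Δ else 0))) Finset.univ ⊆
          ({A, A + Δ} : Finset ℤ) := by
        intro x hx
        obtain ⟨v, -, rfl⟩ := Finset.mem_image.mp hx
        by_cases h : TCIsMax π v <;> simp [h] <;> ring_nf <;> simp
      calc (Finset.image
          (fun j => R j - (R j - A - (if TCIsMax π j then Δ else 0))) Finset.univ).card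
          ≤ ({A, A + Δ} : Finset ℤ).card := Finset.card_le_card hsub
        _ ≤ 2 := by
            have := Finset.card_insert_le A ({A + Δ} : Finset ℤ)
            simp at this ⊢
            omega
end

section
/- If a permutation π of {1,…,n} has a strictly decreasing subsequence of length k, then every interval representation of π uses at least k distinct interval lengths, i.e., the set {r_j − ℓ_j : 1 ≤ j ≤ n} has at least k elements. -/
/-- If a permutation has a strictly decreasing subsequence of length `k`, then
every interval representation of it uses at least `k` distinct interval lengths. -/
theorem decreasing_subsequence_forces_lengths (n k : ℕ) (π : Equiv.Perm (Fin n))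
    (f : Fin k → Fin n) (hf : StrictMono f)
    (hdec : ∀ i j : Fin k, i < j → π (f j) < π (f i))
    (ℓ r : Fin n → ℤ) (hrep : IsIntervalRep π ℓ r) :
    k ≤ (Finset.image (fun j => r j - ℓ j) Finset.univ).card := by
  have hg : StrictAnti (fun i : Fin k => r (π (f i)) - ℓ (π (f i))) := by
    intro i j hij
    have h1 := hrep.1 (f i) (f j) (hf hij)
    have h2 := hrep.2.2 _ _ (hdec i j hij)
    dsimp only
    linarith
  calc k = (Finset.univ : Finset (Fin k)).card := by simp
    _ ≤ _ := Finset.card_le_card_of_injOn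
        (fun i => r (π (f i)) - ℓ (π (f i)))
        (fun i _ => Finset.mem_image.mpr ⟨π (f i), Finset.mem_univ _, rfl⟩)
        (fun a _ b _ h => hg.injective h)
end

section
/- If a permutation π of {1,…,n} has no strictly decreasing subsequence of length 3, then every sorted 2-coloring (S, T) of π is feasible: there exist integers α < β and an interval representation [ℓ_j, r_j] (1 ≤ j ≤ n) of π such that r_j − ℓ_j = α for every j ∈ S and r_j − ℓ_j = β for every j ∈ T. -/
/-- Left-to-right scan with anchor jumps. -/
def buildL (anc : ℕ → ℕ) (amt stp : ℕ → ℤ) (i : ℕ) : ℤ :=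
  if h : anc i < i then
    max ((if h0 : 0 < i then buildL anc amt stp (i - 1) else 0) + stp i)
      (buildL anc amt stp (anc i) + amt i)
  else (if h0 : 0 < i then buildL anc amt stp (i - 1) else 0) + stp i
termination_by i
decreasing_by all_goals omega

theorem buildL_eq (anc : ℕ → ℕ) (amt stp : ℕ → ℤ) (i : ℕ) :
    buildL anc amt stp i =
      (if _h : anc i < i then
        max ((if _h : 0 < i then buildL anc amt stp (i - 1) else 0) + stp i)
          (buildL anc amt stp (anc i) + amt i)
      else (if _h : 0 < i then buildL anc amt stp (i - 1) else 0) + stp i) := by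
  conv_lhs => rw [buildL]

theorem buildL_prev_le (anc : ℕ → ℕ) (amt stp : ℕ → ℤ) (i : ℕ) (h : 0 < i) :
    buildL anc amt stp (i - 1) + stp i ≤ buildL anc amt stp i := by
  conv_rhs => rw [buildL_eq]
  split
  · simp [h, le_max_left]
  · simp [h]

theorem buildL_jump_le (anc : ℕ → ℕ) (amt stp : ℕ → ℤ) (i : ℕ) (h : anc i < i) :
    buildL anc amt stp (anc i) + amt i ≤ buildL anc amt stp i := by
  conv_rhs => rw [buildL_eq]
  simp [h, le_max_right]

theorem buildL_strictMono (anc : ℕ → ℕ) (amt stp : ℕ → ℤ) (hstp : ∀ i, 1 ≤ stp i) :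
    StrictMono (buildL anc amt stp) := by
  apply strictMono_nat_of_lt_succ
  intro m
  have h := buildL_prev_le anc amt stp (m+1) (Nat.succ_pos m)
  simp only [Nat.add_sub_cancel] at h
  have := hstp (m+1)
  omega

/-- jump amounts -/
def Az (n : ℕ) (v : ℕ) : ℤ := (2*n+3) * (3*n+3)^(n-1-v)

/-- the big length gap -/
def Dz (n : ℕ) : ℤ := (2*n+3) * (3*n+3)^n

theorem Az_pos (n v : ℕ) : 0 < Az n v := by
  unfold Az
  positivity

theorem Dz_pos (n : ℕ) : 0 < Dz n := by
  unfold Dz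
  positivity

theorem Az_anti (n : ℕ) {v w : ℕ} (h : v ≤ w) : Az n w ≤ Az n v := by
  unfold Az
  have h1 : (1:ℤ) ≤ 3*n+3 := by have := Nat.cast_nonneg (α := ℤ) n; linarith
  have h2 := pow_le_pow_right₀ h1 (Nat.sub_le_sub_left h (n-1))
  have h3 : (0:ℤ) ≤ 2*n+3 := by positivity
  exact mul_le_mul_of_nonneg_left h2 h3

theorem arith1 (n m : ℕ) : (n:ℤ) * ((2*n+3) * (3*n+3)^m) + (2*n+3) ≤ (2*n+3) * (3*n+3)^(m+1) := by
  have h1 : (1:ℤ) ≤ (3*(n:ℤ)+3)^m :=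
    one_le_pow₀ (by have := Nat.cast_nonneg (α := ℤ) n; linarith)
  have hn : (0:ℤ) ≤ (n:ℤ) := by positivity
  rw [pow_succ]
  nlinarith [mul_le_mul_of_nonneg_left h1 (show (0:ℤ) ≤ (2*(n:ℤ)+3) by positivity),
    mul_le_mul_of_nonneg_left h1 (show (0:ℤ) ≤ (2*(n:ℤ)+3)*(n:ℤ) by positivity)]

def ancZ (n : ℕ) (π : Equiv.Perm (Fin n)) (T : Finset (Fin n)) : ℕ → ℕ :=
  fun i =>
    if h : i < n then
      if hne : (T.filter (fun j => j < π ⟨i, h⟩)).Nonempty then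
        ((π.symm ((T.filter (fun j => j < π ⟨i, h⟩)).max' hne) : Fin n) : ℕ)
      else i
    else i

def amtZ (n : ℕ) (π : Equiv.Perm (Fin n)) (T : Finset (Fin n)) : ℕ → ℤ :=
  fun i => if h : i < n then (if π ⟨i, h⟩ ∈ T then Az n (π ⟨i, h⟩ : Fin n) else Dz n + 1) else 1

def stpZ (n : ℕ) (π : Equiv.Perm (Fin n)) (T : Finset (Fin n)) : ℕ → ℤ :=
  fun i => if h : i < n then (if π ⟨i, h⟩ ∈ T then 2 else 1) else 1

theorem stpZ_one_le (n : ℕ) (π : Equiv.Perm (Fin n)) (T : Finset (Fin n)) (i : ℕ) :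
    1 ≤ stpZ n π T i := by
  unfold stpZ
  split
  · split <;> norm_num
  · norm_num

theorem exists_goodL (n : ℕ) (π : Equiv.Perm (Fin n)) (S T : Finset (Fin n))
    (hunion : S ∪ T = Finset.univ) (hdisj : Disjoint S T)
    (hsorted : ∀ x y : Fin n, x < y → π.symm y < π.symm x → x ∈ S ∧ y ∈ T) :
    ∃ L : ℕ → ℤ, StrictMono L ∧
      (∀ x ∈ S, ∀ j ∈ T, j < x → L (π.symm j).val + Dz n < L (π.symm x).val) ∧
      (∀ x ∈ S, ∀ y ∈ T, x < y → (π.symm y).val < (π.symm x).val →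
        L (π.symm x).val < L (π.symm y).val + Dz n) := by
  classical
  set L : ℕ → ℤ := buildL (ancZ n π T) (amtZ n π T) (stpZ n π T) with hLdef
  have hnot : ∀ v : Fin n, v ∈ S → v ∈ T → False := fun v hS hT =>
    Finset.disjoint_left.mp hdisj hS hT
  have hmemT : ∀ v : Fin n, v ∉ S → v ∈ T := by
    intro v hv
    have h1 : v ∈ S ∪ T := by rw [hunion]; exact Finset.mem_univ v
    rcases Finset.mem_union.mp h1 with h | h
    · exact absurd h hv
    · exact h
  have hposOf : ∀ u v : Fin n, u < v → (v ∈ S ∨ u ∈ T) →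
      (π.symm u).val < (π.symm v).val := by
    intro u v huv hc
    by_contra hcon
    push_neg at hcon
    have hne : π.symm v ≠ π.symm u := by
      intro h
      exact absurd (π.symm.injective h).symm (ne_of_lt huv)
    have hlt : π.symm v < π.symm u := by
      rw [Fin.lt_def]
      exact lt_of_le_of_ne hcon (fun h => hne (Fin.ext h))
    obtain ⟨h1, h2⟩ := hsorted u v huv hlt
    rcases hc with hv | hu
    · exact hnot v hv h2
    · exact hnot u h1 hu
  have hvalp : ∀ (i : ℕ) (h : i < n), (π.symm (π ⟨i, h⟩)).val = i := by
    intro i h; rw [Equiv.symm_apply_apply]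
  have hpn : ∀ v : Fin n, (π.symm v).val < n := fun v => (π.symm v).isLt
  have hπp : ∀ v : Fin n, π ⟨(π.symm v).val, hpn v⟩ = v := by
    intro v
    have h1 : (⟨(π.symm v).val, hpn v⟩ : Fin n) = π.symm v := rfl
    rw [h1, Equiv.apply_symm_apply]
  have hstp1 := stpZ_one_le n π T
  have hmono : StrictMono L := buildL_strictMono _ _ _ hstp1
  have hmonole : ∀ {i j : ℕ}, i ≤ j → L i ≤ L j := fun h => hmono.monotone h
  -- general jump lemma at an arbitrary position
  have hPosJump : ∀ (i : ℕ) (hi : i < n)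
      (hne : (T.filter (fun j => j < π ⟨i, hi⟩)).Nonempty),
      L (π.symm ((T.filter (fun j => j < π ⟨i, hi⟩)).max' hne)).val
        + (if π ⟨i, hi⟩ ∈ T then Az n (π ⟨i, hi⟩).val else Dz n + 1) ≤ L i := by
    intro i hi hne
    have hw := Finset.max'_mem _ hne
    rw [Finset.mem_filter] at hw
    have hlt : (π.symm ((T.filter (fun j => j < π ⟨i, hi⟩)).max' hne)).val < i := by
      have h2 := hposOf _ _ hw.2 (Or.inr hw.1)
      rwa [hvalp i hi] at h2
    have hanc : ancZ n π T i
        = (π.symm ((T.filter (fun j => j < π ⟨i, hi⟩)).max' hne)).val := by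
      unfold ancZ
      rw [dif_pos hi, dif_pos hne]
    have hamt : amtZ n π T i
        = (if π ⟨i, hi⟩ ∈ T then Az n (π ⟨i, hi⟩).val else Dz n + 1) := by
      unfold amtZ
      rw [dif_pos hi]
    have hj := buildL_jump_le (ancZ n π T) (amtZ n π T) (stpZ n π T) i
      (by rw [hanc]; exact hlt)
    rw [hanc, hamt] at hj
    exact hj
  have hVjump : ∀ (v : Fin n) (hne : (T.filter (fun j => j < v)).Nonempty),
      L (π.symm ((T.filter (fun j => j < v)).max' hne)).val
        + (if v ∈ T then Az n v.val else Dz n + 1) ≤ L (π.symm v).val := by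
    intro v hne
    have h0 := hPosJump (π.symm v).val (hpn v)
    simp only [hπp v] at h0
    exact h0 hne
  -- B-side: separation for non-inverted (T, S) pairs
  have hlower : ∀ x ∈ S, ∀ j ∈ T, j < x → L (π.symm j).val + Dz n < L (π.symm x).val := by
    intro x hxS j hjT hjx
    have hne : (T.filter (fun a => a < x)).Nonempty :=
      ⟨j, by rw [Finset.mem_filter]; exact ⟨hjT, hjx⟩⟩
    have hw := Finset.max'_mem _ hne
    rw [Finset.mem_filter] at hw
    have hjw : j ≤ (T.filter (fun a => a < x)).max' hne :=
      Finset.le_max' _ _ (by rw [Finset.mem_filter]; exact ⟨hjT, hjx⟩)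
    have hLjw : L (π.symm j).val ≤ L (π.symm ((T.filter (fun a => a < x)).max' hne)).val := by
      rcases eq_or_lt_of_le hjw with h | h
      · rw [h]
      · exact le_of_lt (hmono (hposOf _ _ h (Or.inr hjT)))
    have hj := hVjump x hne
    rw [if_neg (fun h => hnot x hxS h)] at hj
    linarith
  -- upper side: inversions stay within Dz
  have hupper : ∀ x ∈ S, ∀ y ∈ T, x < y → (π.symm y).val < (π.symm x).val →
      L (π.symm x).val < L (π.symm y).val + Dz n := by
    intro x hxS y hyT hxy hpyx
    have hFne : (T.filter (fun a => x < a)).Nonempty :=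
      ⟨y, by rw [Finset.mem_filter]; exact ⟨hyT, hxy⟩⟩
    set y₀ := (T.filter (fun a => x < a)).min' hFne with hy₀def
    have hy₀mem := Finset.min'_mem _ hFne
    rw [← hy₀def, Finset.mem_filter] at hy₀mem
    obtain ⟨hy₀T, hxy₀⟩ := hy₀mem
    have hy₀le : y₀ ≤ y := Finset.min'_le _ _ (by rw [Finset.mem_filter]; exact ⟨hyT, hxy⟩)
    have hpy₀y : (π.symm y₀).val ≤ (π.symm y).val := by
      rcases eq_or_lt_of_le hy₀le with h | h
      · rw [h]
      · exact le_of_lt (hposOf _ _ h (Or.inr hy₀T))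
    have hpy₀x : (π.symm y₀).val < (π.symm x).val := lt_of_le_of_lt hpy₀y hpyx
    suffices hs : L (π.symm x).val ≤ L (π.symm y₀).val + (Dz n - 1) by
      have h2 : L (π.symm y₀).val ≤ L (π.symm y).val := hmonole hpy₀y
      linarith
    -- the running sum of jump amounts in the window
    set Sig : ℕ → ℤ := fun q =>
      ((T.filter (fun w => (π.symm y₀).val < (π.symm w).val ∧ (π.symm w).val ≤ q)).sum
        (fun w => Az n w.val)) with hSigdef
    have hSig_nonneg : ∀ q, 0 ≤ Sig q :=
      fun q => Finset.sum_nonneg (fun w _ => le_of_lt (Az_pos n w.val))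
    have hSig_mono : ∀ {q q' : ℕ}, q ≤ q' → Sig q ≤ Sig q' := by
      intro q q' h
      apply Finset.sum_le_sum_of_subset_of_nonneg
      · intro a ha
        simp only [Finset.mem_filter] at ha ⊢
        exact ⟨ha.1, ha.2.1, le_trans ha.2.2 h⟩
      · intro w _ _
        exact le_of_lt (Az_pos n w.val)
    have key : ∀ (M : ℤ), L (π.symm y₀).val ≤ M →
        (∀ w : Fin n, w ∈ T → w < x → L (π.symm w).val + (Dz n + 1) ≤ M) →
        ∀ q : ℕ, (π.symm y₀).val ≤ q → q < (π.symm x).val →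
          L q ≤ M + Sig q + 2*((q:ℤ) - ((π.symm y₀).val : ℤ)) := by
      intro M hM1 hM2 q
      induction q using Nat.strong_induction_on with
      | _ q ih =>
        intro hq1 hq2
        rcases eq_or_lt_of_le hq1 with heq | hqgt
        · rw [← heq]
          have h0 := hSig_nonneg (π.symm y₀).val
          linarith
        · have hq0 : 0 < q := by omega
          have hqn : q < n := lt_trans hq2 (hpn x)
          have hprev := ih (q-1) (by omega) (by omega) (by omega)
          have hSigm : Sig (q-1) ≤ Sig q := hSig_mono (by omega)
          have hcast : ((q-1:ℕ):ℤ) = (q:ℤ) - 1 := by omega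
          set u := π ⟨q, hqn⟩ with hu
          have hpu : (π.symm u).val = q := hvalp q hqn
          have heqq := buildL_eq (ancZ n π T) (amtZ n π T) (stpZ n π T) q
          rw [← hLdef] at heqq
          rw [dif_pos hq0] at heqq
          by_cases huT : u ∈ T
          · have hstpq : stpZ n π T q = 2 := by
              unfold stpZ; rw [dif_pos hqn, ← hu, if_pos huT]
            have hamtq : amtZ n π T q = Az n u.val := by
              unfold amtZ; rw [dif_pos hqn, ← hu, if_pos huT]
            have hy₀u : y₀ < u := by
              rcases lt_trichotomy u y₀ with h | h | h
              · exfalso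
                have h2 := hposOf u y₀ h (Or.inr huT)
                rw [hpu] at h2
                omega
              · exfalso; rw [h] at hpu; omega
              · exact h
            have hneU : (T.filter (fun j => j < u)).Nonempty :=
              ⟨y₀, by rw [Finset.mem_filter]; exact ⟨hy₀T, hy₀u⟩⟩
            set wu := (T.filter (fun j => j < u)).max' hneU with hwu
            have hwum := Finset.max'_mem _ hneU
            rw [Finset.mem_filter] at hwum
            have hy₀wu : y₀ ≤ wu :=
              Finset.le_max' _ _ (by rw [Finset.mem_filter]; exact ⟨hy₀T, hy₀u⟩)
            have hpwu : (π.symm wu).val < q := by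
              have h2 := hposOf wu u hwum.2 (Or.inr hwum.1)
              rwa [hpu] at h2
            have hancq : ancZ n π T q = (π.symm wu).val := by
              unfold ancZ; rw [dif_pos hqn, ← hu, dif_pos hneU]
            have hjb : L (π.symm wu).val + Az n u.val
                ≤ M + Sig q + 2*((q:ℤ) - ((π.symm y₀).val:ℤ)) := by
              rcases eq_or_lt_of_le hy₀wu with hww | hww
              · have hmemu : u ∈ T.filter
                    (fun w => (π.symm y₀).val < (π.symm w).val ∧ (π.symm w).val ≤ q) := by
                  rw [Finset.mem_filter]
                  exact ⟨huT, by rw [hpu]; exact ⟨hqgt, le_refl q⟩⟩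
                have hAle : Az n u.val ≤ Sig q :=
                  Finset.single_le_sum (fun w _ => le_of_lt (Az_pos n w.val)) hmemu
                rw [← hww]
                have hc : ((π.symm y₀).val:ℤ) ≤ (q:ℤ) := by exact_mod_cast hq1
                linarith
              · have hpy₀wu : (π.symm y₀).val < (π.symm wu).val :=
                  hposOf y₀ wu hww (Or.inr hy₀T)
                have hIH := ih (π.symm wu).val hpwu (le_of_lt hpy₀wu) (lt_trans hpwu hq2)
                have hsub : Sig ((π.symm wu).val) + Az n u.val ≤ Sig q := by
                  have hnm : u ∉ T.filter
                      (fun w => (π.symm y₀).val < (π.symm w).val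
                        ∧ (π.symm w).val ≤ (π.symm wu).val) := by
                    rw [Finset.mem_filter]
                    rintro ⟨-, -, hle⟩
                    rw [hpu] at hle
                    omega
                  have hins : Sig ((π.symm wu).val) + Az n u.val
                      = ((insert u (T.filter (fun w => (π.symm y₀).val < (π.symm w).val
                          ∧ (π.symm w).val ≤ (π.symm wu).val))).sum (fun w => Az n w.val)) := by
                    rw [Finset.sum_insert hnm]; ring
                  rw [hins]
                  apply Finset.sum_le_sum_of_subset_of_nonneg
                  · intro a ha
                    rcases Finset.mem_insert.mp ha with h | h
                    · rw [h, Finset.mem_filter]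
                      exact ⟨huT, by rw [hpu]; exact ⟨hqgt, le_refl q⟩⟩
                    · simp only [Finset.mem_filter] at h ⊢
                      exact ⟨h.1, h.2.1, le_trans h.2.2 (le_of_lt hpwu)⟩
                  · intro w _ _
                    exact le_of_lt (Az_pos n w.val)
                have hc2 : ((π.symm wu).val:ℤ) ≤ (q:ℤ) := by exact_mod_cast le_of_lt hpwu
                linarith
            rw [heqq, dif_pos (show ancZ n π T q < q by rw [hancq]; exact hpwu),
              hancq, hamtq, hstpq]
            apply max_le
            · linarith
            · exact hjb
          · have huS : u ∈ S := by
              by_contra h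
              exact huT (hmemT u h)
            have hstpq : stpZ n π T q = 1 := by
              unfold stpZ; rw [dif_pos hqn, ← hu, if_neg huT]
            have hux : u < x := by
              rcases lt_trichotomy u x with h | h | h
              · exact h
              · exfalso; rw [h] at hpu; omega
              · exfalso
                have h2 := hposOf x u h (Or.inl huS)
                rw [hpu] at h2; omega
            have hc : ((π.symm y₀).val:ℤ) ≤ (q:ℤ) := by exact_mod_cast hq1
            by_cases hanc : ancZ n π T q < q
            · have hneU : (T.filter (fun j => j < u)).Nonempty := by
                by_contra hemp
                have h3 : ancZ n π T q = q := by
                  unfold ancZ; rw [dif_pos hqn, ← hu, dif_neg hemp]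
                omega
              set wu := (T.filter (fun j => j < u)).max' hneU with hwu
              have hwum := Finset.max'_mem _ hneU
              rw [Finset.mem_filter] at hwum
              have hancq : ancZ n π T q = (π.symm wu).val := by
                unfold ancZ; rw [dif_pos hqn, ← hu, dif_pos hneU]
              have hamtq : amtZ n π T q = Dz n + 1 := by
                unfold amtZ; rw [dif_pos hqn, ← hu, if_neg huT]
              have hjb : L (π.symm wu).val + (Dz n + 1) ≤ M :=
                hM2 wu hwum.1 (lt_trans hwum.2 hux)
              rw [heqq, dif_pos hanc, hancq, hamtq, hstpq]
              apply max_le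
              · linarith
              · have h1 := hSig_nonneg q
                linarith
            · rw [heqq, dif_neg hanc, hstpq]
              linarith
    -- value-filter bound on Sig
    have hSig_le_val : ∀ q : ℕ, Sig q ≤ ((T.filter (fun w => y₀ < w)).sum (fun w => Az n w.val)) := by
      intro q
      apply Finset.sum_le_sum_of_subset_of_nonneg
      · intro w hw
        simp only [Finset.mem_filter] at hw ⊢
        obtain ⟨hwT, hw1, hw2⟩ := hw
        refine ⟨hwT, ?_⟩
        rcases lt_trichotomy w y₀ with h | h | h
        · exfalso
          have h2 := hposOf w y₀ h (Or.inr hwT)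
          omega
        · exfalso; rw [h] at hw1; omega
        · exact h
      · intro w _ _; exact le_of_lt (Az_pos n w.val)
    have hbase1 : (1:ℤ) ≤ 3*(n:ℤ)+3 := by
      have := Nat.cast_nonneg (α := ℤ) n; linarith
    have hAz_le_Dz : ∀ v : ℕ, Az n v ≤ Dz n := by
      intro v
      unfold Az Dz
      have h2 := pow_le_pow_right₀ hbase1 (Nat.sub_le n v |>.trans (le_refl n) |> fun _ => Nat.sub_le (n-1) v |>.trans (Nat.sub_le n 1))
      exact mul_le_mul_of_nonneg_left
        (pow_le_pow_right₀ hbase1 ((Nat.sub_le (n-1) v).trans (Nat.sub_le n 1)))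
        (by positivity)
    have hAyb : ((T.filter (fun w => y₀ < w)).sum (fun w => Az n w.val)) + (2*(n:ℤ)+3)
        ≤ Az n y₀.val := by
      rcases Nat.lt_or_ge y₀.val (n-1) with hy | hy
      · have hTsum : ((T.filter (fun w => y₀ < w)).sum (fun w => Az n w.val))
            ≤ (n:ℤ) * ((2*n+3) * (3*n+3)^(n-1-(y₀.val+1))) := by
          have hb : ∀ w ∈ T.filter (fun w => y₀ < w),
              Az n w.val ≤ (2*(n:ℤ)+3) * (3*n+3)^(n-1-(y₀.val+1)) := by
            intro w hw
            simp only [Finset.mem_filter] at hw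
            have h3 : y₀.val + 1 ≤ w.val := hw.2
            exact Az_anti n h3
          calc ((T.filter (fun w => y₀ < w)).sum (fun w => Az n w.val))
              ≤ (T.filter (fun w => y₀ < w)).card
                  • ((2*(n:ℤ)+3) * (3*n+3)^(n-1-(y₀.val+1))) :=
                Finset.sum_le_card_nsmul _ _ _ hb
            _ = ((T.filter (fun w => y₀ < w)).card : ℤ)
                  * ((2*(n:ℤ)+3) * (3*n+3)^(n-1-(y₀.val+1))) := nsmul_eq_mul _ _
            _ ≤ (n:ℤ) * ((2*(n:ℤ)+3) * (3*n+3)^(n-1-(y₀.val+1))) := by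
                apply mul_le_mul_of_nonneg_right _ (by positivity)
                have hcard : (T.filter (fun w => y₀ < w)).card ≤ n := by
                  calc (T.filter (fun w => y₀ < w)).card ≤ (Finset.univ : Finset (Fin n)).card :=
                        Finset.card_le_univ _
                    _ = n := by simp
                exact_mod_cast hcard
        have hexp : n - 1 - y₀.val = (n-1-(y₀.val+1)) + 1 := by omega
        have hAy : Az n y₀.val = (2*(n:ℤ)+3) * (3*n+3)^((n-1-(y₀.val+1))+1) := by
          unfold Az; rw [hexp]
        rw [hAy]
        have := arith1 n (n-1-(y₀.val+1))
        linarith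
      · have hempty : T.filter (fun w => y₀ < w) = ∅ := by
          apply Finset.filter_eq_empty_iff.mpr
          intro w _
          intro hlt
          have h1 : y₀.val < w.val := hlt
          have h2 := w.isLt
          omega
        rw [hempty, Finset.sum_empty]
        have hexp : n - 1 - y₀.val = 0 := by omega
        unfold Az
        rw [hexp, pow_zero, mul_one]
        linarith
    have hDzb : ((T.filter (fun w => y₀ < w)).sum (fun w => Az n w.val)) + (2*(n:ℤ)+3)
        ≤ Dz n := le_trans hAyb (hAz_le_Dz y₀.val)
    -- position-px facts
    have hpx0 : 0 < (π.symm x).val := by omega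
    have heqx := buildL_eq (ancZ n π T) (amtZ n π T) (stpZ n π T) (π.symm x).val
    rw [← hLdef, dif_pos hpx0] at heqx
    have hstpx : stpZ n π T (π.symm x).val = 1 := by
      unfold stpZ; rw [dif_pos (hpn x), hπp x, if_neg (fun h => hnot x hxS h)]
    have hkprev : ∀ (M : ℤ), L (π.symm y₀).val ≤ M →
        (∀ w : Fin n, w ∈ T → w < x → L (π.symm w).val + (Dz n + 1) ≤ M) →
        L ((π.symm x).val - 1) ≤ M + ((T.filter (fun w => y₀ < w)).sum (fun w => Az n w.val))
          + 2*((n:ℤ) - 2) := by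
      intro M h1 h2
      have hk := key M h1 h2 ((π.symm x).val - 1) (by omega) (by omega)
      have hs1 := hSig_le_val ((π.symm x).val - 1)
      have hc1 : (((π.symm x).val - 1 : ℕ):ℤ) = ((π.symm x).val:ℤ) - 1 := by omega
      have hc2 : ((π.symm x).val:ℤ) ≤ (n:ℤ) - 1 := by
        have := hpn x; omega
      have hc3 : (0:ℤ) ≤ ((π.symm y₀).val:ℤ) := by positivity
      linarith
    by_cases hTb : (T.filter (fun j => j < x)).Nonempty
    · -- there is a T-value below x
      set w₀ := (T.filter (fun j => j < x)).max' hTb with hw₀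
      have hw₀m := Finset.max'_mem _ hTb
      rw [← hw₀, Finset.mem_filter] at hw₀m
      set M : ℤ := max (L (π.symm y₀).val) (L (π.symm w₀).val + (Dz n + 1)) with hM
      have h1 : L (π.symm y₀).val ≤ M := le_max_left _ _
      have h2 : ∀ w : Fin n, w ∈ T → w < x → L (π.symm w).val + (Dz n + 1) ≤ M := by
        intro w hwT hwx
        have hle : w ≤ w₀ := Finset.le_max' _ _ (by rw [Finset.mem_filter]; exact ⟨hwT, hwx⟩)
        have hLle : L (π.symm w).val ≤ L (π.symm w₀).val := by
          rcases eq_or_lt_of_le hle with h | h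
          · rw [h]
          · exact le_of_lt (hmono (hposOf _ _ h (Or.inr hwT)))
        have := le_max_right (L (π.symm y₀).val) (L (π.symm w₀).val + (Dz n + 1))
        linarith
      -- the gap below y₀
      have hfeq : T.filter (fun j => j < y₀) = T.filter (fun j => j < x) := by
        ext w
        simp only [Finset.mem_filter]
        constructor
        · rintro ⟨hwT, hwy⟩
          refine ⟨hwT, ?_⟩
          rcases lt_trichotomy w x with h | h | h
          · exact h
          · exfalso; rw [h] at hwT; exact hnot x hxS hwT
          · exfalso
            have : y₀ ≤ w := Finset.min'_le _ _ (by rw [Finset.mem_filter]; exact ⟨hwT, h⟩)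
            exact absurd hwy (not_lt.mpr this)
        · rintro ⟨hwT, hwx⟩
          exact ⟨hwT, lt_trans hwx hxy₀⟩
      have hfne' : (T.filter (fun j => j < y₀)).Nonempty := by rw [hfeq]; exact hTb
      have hgen : ∀ (s t : Finset (Fin n)) (h : s = t) (hs : s.Nonempty),
          s.max' hs = t.max' (h ▸ hs) := by
        intro s t h hs
        subst h
        rfl
      have hmaxeq : (T.filter (fun j => j < y₀)).max' hfne' = w₀ := by
        rw [hw₀]
        exact hgen _ _ hfeq hfne'
      have hgap : L (π.symm w₀).val + Az n y₀.val ≤ L (π.symm y₀).val := by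
        have := hVjump y₀ hfne'
        rw [if_pos hy₀T, hmaxeq] at this
        exact this
      have hAzDz : Az n y₀.val ≤ Dz n := hAz_le_Dz y₀.val
      have hMle : M ≤ L (π.symm y₀).val + (Dz n + 1) - Az n y₀.val := by
        apply max_le
        · linarith
        · linarith
      -- the jump at x
      have hancx : ancZ n π T (π.symm x).val = (π.symm w₀).val := by
        unfold ancZ; rw [dif_pos (hpn x)]
        simp only [hπp x]
        rw [dif_pos hTb, ← hw₀]
      have hamtx : amtZ n π T (π.symm x).val = Dz n + 1 := by
        unfold amtZ; rw [dif_pos (hpn x)]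
        simp only [hπp x]
        rw [if_neg (fun h => hnot x hxS h)]
      have hancxlt : ancZ n π T (π.symm x).val < (π.symm x).val := by
        rw [hancx]
        exact hposOf w₀ x hw₀m.2 (Or.inl hxS)
      rw [heqx, dif_pos hancxlt, hancx, hamtx, hstpx]
      have hkp := hkprev M h1 h2
      have hAz3 : (3:ℤ) ≤ Az n y₀.val := by
        unfold Az
        have h4 : (1:ℤ) ≤ (3*(n:ℤ)+3)^(n-1-y₀.val) :=
          one_le_pow₀ hbase1
        nlinarith [Nat.cast_nonneg (α := ℤ) n]
      apply max_le
      · linarith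
      · linarith
    · -- no T-value below x
      have hancx : ancZ n π T (π.symm x).val = (π.symm x).val := by
        unfold ancZ; rw [dif_pos (hpn x)]
        simp only [hπp x]
        rw [dif_neg hTb]
      rw [heqx, dif_neg (by rw [hancx]; omega), hstpx]
      have h2 : ∀ w : Fin n, w ∈ T → w < x →
          L (π.symm w).val + (Dz n + 1) ≤ L (π.symm y₀).val := by
        intro w hwT hwx
        exact absurd ⟨w, by rw [Finset.mem_filter]; exact ⟨hwT, hwx⟩⟩ hTb
      have hkp := hkprev _ (le_refl _) h2
      have hn0 : (0:ℤ) ≤ (n:ℤ) := by positivity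
      linarith
  exact ⟨L, hmono, hlower, hupper⟩

/-- If a permutation `π` of `{1,…,n}` has no strictly decreasing subsequence of
length 3, then every sorted 2-coloring `(S, T)` of `π` is feasible: there exist
integers `α < β` and an interval representation of `π` in which every interval
indexed by `S` has length `α` and every interval indexed by `T` has length `β`. -/
theorem sorted_two_coloring_feasible (n : ℕ) (π : Equiv.Perm (Fin n))
    (hdepth : ¬ ∃ i j k : Fin n, i < j ∧ j < k ∧ π j < π i ∧ π k < π j)
    (S T : Finset (Fin n)) (hunion : S ∪ T = Finset.univ) (hdisj : Disjoint S T)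
    (hsorted : ∀ x y : Fin n, x < y → π.symm y < π.symm x → x ∈ S ∧ y ∈ T) :
    ∃ (α β : ℤ) (ℓ r : Fin n → ℤ), α < β ∧ IsIntervalRep π ℓ r ∧
      (∀ j ∈ S, r j - ℓ j = α) ∧ (∀ j ∈ T, r j - ℓ j = β) := by
  classical
  obtain ⟨L, hmono, hlower, hupper⟩ := exists_goodL n π S T hunion hdisj hsorted
  have hnot : ∀ v : Fin n, v ∈ S → v ∈ T → False := fun v hS hT =>
    Finset.disjoint_left.mp hdisj hS hT
  have hmemT : ∀ v : Fin n, v ∉ S → v ∈ T := by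
    intro v hv
    have h1 : v ∈ S ∪ T := by rw [hunion]; exact Finset.mem_univ v
    rcases Finset.mem_union.mp h1 with h | h
    · exact absurd h hv
    · exact h
  have hposOf : ∀ u v : Fin n, u < v → (v ∈ S ∨ u ∈ T) →
      (π.symm u).val < (π.symm v).val := by
    intro u v huv hc
    by_contra hcon
    push_neg at hcon
    have hne : π.symm v ≠ π.symm u := by
      intro h
      exact absurd (π.symm.injective h).symm (ne_of_lt huv)
    have hlt : π.symm v < π.symm u := by
      rw [Fin.lt_def]
      exact lt_of_le_of_ne hcon (fun h => hne (Fin.ext h))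
    obtain ⟨h1, h2⟩ := hsorted u v huv hlt
    rcases hc with hv | hu
    · exact hnot v hv h2
    · exact hnot u h1 hu
  refine ⟨L (n-1) - L 0 + 1, L (n-1) - L 0 + 1 + Dz n,
    fun v => L (π.symm v).val,
    fun v => L (π.symm v).val +
      (if v ∈ S then L (n-1) - L 0 + 1 else L (n-1) - L 0 + 1 + Dz n),
    ?_, ⟨?_, ?_, ?_⟩, ?_, ?_⟩
  · linarith [Dz_pos n]
  · intro i j hij
    show L (π.symm (π i)).val < L (π.symm (π j)).val
    rw [Equiv.symm_apply_apply, Equiv.symm_apply_apply]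
    exact hmono hij
  · intro i j
    show L (π.symm i).val < L (π.symm j).val + _
    have h1 : L (π.symm i).val ≤ L (n-1) := by
      apply hmono.monotone
      have := (π.symm i).isLt
      omega
    have h2 : L 0 ≤ L (π.symm j).val := hmono.monotone (Nat.zero_le _)
    have h3 : (0:ℤ) < Dz n := Dz_pos n
    by_cases hj : j ∈ S
    · rw [if_pos hj]; linarith
    · rw [if_neg hj]; linarith
  · intro u v huv
    show L (π.symm u).val + _ < L (π.symm v).val + _
    by_cases huS : u ∈ S <;> by_cases hvS : v ∈ S
    · rw [if_pos huS, if_pos hvS]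
      have := hmono (hposOf u v huv (Or.inl hvS))
      linarith
    · have hvT := hmemT v hvS
      rw [if_pos huS, if_neg hvS]
      rcases lt_or_ge (π.symm u).val (π.symm v).val with hp | hp
      · have := hmono hp
        linarith [Dz_pos n]
      · have hne : (π.symm v).val ≠ (π.symm u).val := by
          intro h
          exact absurd (π.symm.injective (Fin.ext h)).symm (ne_of_lt huv)
        have hlt : (π.symm v).val < (π.symm u).val := lt_of_le_of_ne hp hne
        have := hupper u huS v hvT huv hlt
        linarith
    · have huT := hmemT u huS
      rw [if_neg huS, if_pos hvS]
      have := hlower v hvS u huT huv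
      linarith
    · have huT := hmemT u huS
      have hvT := hmemT v hvS
      rw [if_neg huS, if_neg hvS]
      have := hmono (hposOf u v huv (Or.inr huT))
      linarith
  · intro j hj
    show L (π.symm j).val + _ - L (π.symm j).val = _
    rw [if_pos hj]
    ring
  · intro j hj
    show L (π.symm j).val + _ - L (π.symm j).val = _
    rw [if_neg (fun h => hnot j h hj)]
    ring
end

section
/- Let (ℓ, r) be an interval representation of a permutation π of {1,…,n} and let (S, T) be a sorted 2-coloring of π. Suppose rational numbers α < β satisfy: (i) for every 1 ≤ i < n with π(i) ∈ T and π(i+1) ∈ S, r_{π(i)} − r_{π(i+1)} < β − α; (ii) for every 1 ≤ i < n with π(i) ∈ S and π(i+1) ∈ T, β − α < r_{π(i+1)} − r_{π(i)}; (iii) α > r_{π(n)} − r_1 in case π(n) ∈ S, and β > r_{π(n)} − r_1 in case π(n) ∈ T. Define ℓ'_x = r_x − α for x ∈ S and ℓ'_x = r_x − β for x ∈ T. Then ℓ'_{π(1)} < ℓ'_{π(2)} < ⋯ < ℓ'_{π(n)} < r_1 < r_2 < ⋯ < r_n; consequently the intervals [ℓ'_x, r_x] form an interval representation of π (with rational endpoints)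 using only the two lengths α and β. -/
/-- Given an interval representation `(ℓ, r)` of `π`, a sorted 2-coloring
`(S, T)` and rationals `α < β` dominating all TS-slacks, dominated by all
ST-slacks, and with the appropriate one of `α`, `β` exceeding
`r (π n) - r 1`, the modified left endpoints `ℓ' x = r x - α` (for `x ∈ S`)
and `ℓ' x = r x - β` (for `x ∈ T`) yield an interval representation of `π`
with rational endpoints, using only the lengths `α` and `β`. -/
theorem adjusted_endpoints_give_two_count (n : ℕ) (hn : 0 < n)
    (π : Equiv.Perm (Fin n)) (ℓ r : Fin n → ℤ) (hrep : IsIntervalRep π ℓ r)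
    (S T : Finset (Fin n)) (hunion : S ∪ T = Finset.univ) (hdisj : Disjoint S T)
    (hsorted : ∀ x y : Fin n, x < y → π.symm y < π.symm x → x ∈ S ∧ y ∈ T)
    (α β : ℚ) (hαβ : α < β)
    (hTS : ∀ (i : ℕ) (h : i + 1 < n),
      π ⟨i, Nat.lt_of_succ_lt h⟩ ∈ T → π ⟨i + 1, h⟩ ∈ S →
        (r (π ⟨i, Nat.lt_of_succ_lt h⟩) : ℚ) - (r (π ⟨i + 1, h⟩) : ℚ) < β - α)
    (hST : ∀ (i : ℕ) (h : i + 1 < n),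
      π ⟨i, Nat.lt_of_succ_lt h⟩ ∈ S → π ⟨i + 1, h⟩ ∈ T →
        β - α < (r (π ⟨i + 1, h⟩) : ℚ) - (r (π ⟨i, Nat.lt_of_succ_lt h⟩) : ℚ))
    (hlastS : π ⟨n - 1, Nat.sub_lt hn Nat.one_pos⟩ ∈ S →
      (r (π ⟨n - 1, Nat.sub_lt hn Nat.one_pos⟩) : ℚ) - (r ⟨0, hn⟩ : ℚ) < α)
    (hlastT : π ⟨n - 1, Nat.sub_lt hn Nat.one_pos⟩ ∈ T →
      (r (π ⟨n - 1, Nat.sub_lt hn Nat.one_pos⟩) : ℚ) - (r ⟨0, hn⟩ : ℚ) < β)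
    (ℓ' : Fin n → ℚ)
    (hℓ' : ∀ x : Fin n, (x ∈ S → ℓ' x = (r x : ℚ) - α) ∧
      (x ∈ T → ℓ' x = (r x : ℚ) - β)) :
    (∀ i j : Fin n, i < j → ℓ' (π i) < ℓ' (π j)) ∧
    (∀ i j : Fin n, ℓ' i < (r j : ℚ)) ∧
    (∀ i j : Fin n, i < j → (r i : ℚ) < (r j : ℚ)) ∧
    (∀ x : Fin n, (r x : ℚ) - ℓ' x = α ∨ (r x : ℚ) - ℓ' x = β) := by

  obtain ⟨hℓmono, hℓr, hrmono⟩ := hrep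
  have hmem : ∀ x : Fin n, x ∈ S ∨ x ∈ T := by
    intro x
    have : x ∈ S ∪ T := by rw [hunion]; exact Finset.mem_univ x
    exact Finset.mem_union.mp this
  have hnotboth : ∀ x : Fin n, x ∈ S → x ∈ T → False := fun x hs ht =>
    (Finset.disjoint_left.mp hdisj hs) ht
  have hr : ∀ i j : Fin n, i < j → (r i : ℚ) < r j := fun i j hij => by
    exact_mod_cast hrmono i j hij
  have hadj : ∀ (i : ℕ) (h : i + 1 < n),
      ℓ' (π ⟨i, Nat.lt_of_succ_lt h⟩) < ℓ' (π ⟨i + 1, h⟩) := by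
    intro i h
    set a : Fin n := ⟨i, Nat.lt_of_succ_lt h⟩ with ha
    set b : Fin n := ⟨i + 1, h⟩ with hb
    have hab : a < b := by simp [ha, hb, Fin.lt_def]
    have hsymm : π.symm (π a) < π.symm (π b) := by simpa using hab
    have hlt : ¬ (π b < π a) → π a < π b := by
      intro hnlt
      have hne : π a ≠ π b := fun e => by
        have := π.injective e; simp [ha, hb, Fin.ext_iff] at this
      exact lt_of_le_of_ne (not_lt.mp hnlt) hne
    rcases hmem (π a) with haS | haT <;> rcases hmem (π b) with hbS | hbT
    · -- S S
      have hnlt : ¬ (π b < π a) := fun hba =>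
        hnotboth (π a) haS (hsorted (π b) (π a) hba (by simpa using hab)).2
      have := hr (π a) (π b) (hlt hnlt)
      rw [(hℓ' (π a)).1 haS, (hℓ' (π b)).1 hbS]
      linarith
    · -- S T
      have := hST i h haS hbT
      rw [(hℓ' (π a)).1 haS, (hℓ' (π b)).2 hbT]
      linarith
    · -- T S : inversion case allowed
      have := hTS i h haT hbS
      rw [(hℓ' (π a)).2 haT, (hℓ' (π b)).1 hbS]
      linarith
    · -- T T
      have hnlt : ¬ (π b < π a) := fun hba =>
        hnotboth (π b) (hsorted (π b) (π a) hba (by simpa using hab)).1 hbT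
      have := hr (π a) (π b) (hlt hnlt)
      rw [(hℓ' (π a)).2 haT, (hℓ' (π b)).2 hbT]
      linarith
  have hmono : ∀ (j : ℕ) (hj : j < n) (i : ℕ) (hij : i < j),
      ℓ' (π ⟨i, hij.trans hj⟩) < ℓ' (π ⟨j, hj⟩) := by
    intro j
    induction j with
    | zero => intro hj i hij; omega
    | succ k ih =>
      intro hj i hij
      rcases Nat.lt_or_ge i k with h1 | h1
      · exact lt_trans (ih (Nat.lt_of_succ_lt hj) i h1) (hadj k hj)
      · have : i = k := by omega
        subst this
        exact hadj i hj
  have part1 : ∀ i j : Fin n, i < j → ℓ' (π i) < ℓ' (π j) := by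
    intro i j hij
    have := hmono j.val j.isLt i.val hij
    simpa using this
  refine ⟨part1, ?_, fun i j hij => hr i j hij, ?_⟩
  · intro i j
    set m : Fin n := ⟨n - 1, Nat.sub_lt hn Nat.one_pos⟩ with hm
    have h1 : ℓ' i ≤ ℓ' (π m) := by
      rcases eq_or_lt_of_le (Nat.le_sub_one_of_lt (π.symm i).isLt) with he | hl
      · have : π.symm i = m := Fin.ext he
        rw [← this]; simp
      · have := hmono (n - 1) (Nat.sub_lt hn Nat.one_pos) (π.symm i).val hl
        rw [Fin.eta, Equiv.apply_symm_apply] at this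
        exact le_of_lt this
    have h2 : ℓ' (π m) < (r ⟨0, hn⟩ : ℚ) := by
      rcases hmem (π m) with hS | hT
      · rw [(hℓ' (π m)).1 hS]; have := hlastS hS; linarith
      · rw [(hℓ' (π m)).2 hT]; have := hlastT hT; linarith
    have h3 : (r ⟨0, hn⟩ : ℚ) ≤ r j := by
      rcases Nat.eq_zero_or_pos j.val with h0 | h0
      · have : (⟨0, hn⟩ : Fin n) = j := Fin.ext h0.symm
        rw [this]
      · exact le_of_lt (hr ⟨0, hn⟩ j h0)
    linarith
  · intro x
    rcases hmem x with hS | hT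
    · left; rw [(hℓ' x).1 hS]; ring
    · right; rw [(hℓ' x).2 hT]; ring
end

section
/- Let (ℓ, r) be an interval representation of a permutation π of {1,…,n}, let (S, T) be a partition of {1,…,n}, and let α < β be integers with r_j − ℓ_j = α for all j ∈ S and r_j − ℓ_j = β for all j ∈ T. Then for every 1 ≤ i < n: if π(i) ∈ T and π(i+1) ∈ S, then r_{π(i)} − r_{π(i+1)} < β − α; and if π(i) ∈ S and π(i+1) ∈ T, then β − α < r_{π(i+1)} − r_{π(i)}. In particular, every TS-slack value is strictly smaller than every ST-slack value. -/
/-- In a 2-count interval representation of `π` with lengths `α` on `S` and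
`β` on `T` (`α < β`), every TS-slack `r (π i) - r (π (i+1))` is strictly
smaller than `β - α`, and `β - α` is strictly smaller than every ST-slack
`r (π (i+1)) - r (π i)`.  In particular every TS-slack is strictly smaller
than every ST-slack. -/
theorem slack_bounds_of_two_count (n : ℕ) (π : Equiv.Perm (Fin n))
    (ℓ r : Fin n → ℤ) (hrep : IsIntervalRep π ℓ r)
    (S T : Finset (Fin n)) (hunion : S ∪ T = Finset.univ) (hdisj : Disjoint S T)
    (α β : ℤ) (hαβ : α < β)
    (hS : ∀ j ∈ S, r j - ℓ j = α) (hT : ∀ j ∈ T, r j - ℓ j = β) :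
    ∀ (i : ℕ) (h : i + 1 < n),
      (π ⟨i, Nat.lt_of_succ_lt h⟩ ∈ T → π ⟨i + 1, h⟩ ∈ S →
        r (π ⟨i, Nat.lt_of_succ_lt h⟩) - r (π ⟨i + 1, h⟩) < β - α) ∧
      (π ⟨i, Nat.lt_of_succ_lt h⟩ ∈ S → π ⟨i + 1, h⟩ ∈ T →
        β - α < r (π ⟨i + 1, h⟩) - r (π ⟨i, Nat.lt_of_succ_lt h⟩)) := by
  intro i h
  have hℓ : ℓ (π ⟨i, Nat.lt_of_succ_lt h⟩) < ℓ (π ⟨i + 1, h⟩) :=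
    hrep.1 _ _ (by simp [Fin.mk_lt_mk])
  constructor
  · intro h1 h2
    have e1 := hT _ h1
    have e2 := hS _ h2
    linarith
  · intro h1 h2
    have e1 := hS _ h1
    have e2 := hT _ h2
    linarith
end

section
/- Let (ℓ, r) be an interval representation of a permutation π of {1,…,n} and (S, T) a sorted 2-coloring of π, and let J_1, J_2 be two distinct slack intervals of this representation. Then: (i) if J_1 ⊊ J_2, then J_1 is a TS-slack interval, J_2 is an ST-slack interval, and J_1 and J_2 have a common left endpoint or a common right endpoint; (ii) if neither of J_1, J_2 contains the other, then J_1 and J_2 share no common endpoint. -/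
/-- `[a, b]` is a TS-slack interval: for some `i` with `π(i) ∈ T`,
`π(i+1) ∈ S` and `r (π (i+1)) < r (π i)`, it is `[r (π (i+1)), r (π i)]`. -/
def IsTSSlack {n : ℕ} (π : Equiv.Perm (Fin n)) (r : Fin n → ℤ)
    (S T : Finset (Fin n)) (a b : ℤ) : Prop :=
  ∃ (i : ℕ) (h : i + 1 < n),
    π ⟨i, Nat.lt_of_succ_lt h⟩ ∈ T ∧ π ⟨i + 1, h⟩ ∈ S ∧
    a = r (π ⟨i + 1, h⟩) ∧ b = r (π ⟨i, Nat.lt_of_succ_lt h⟩) ∧ a < b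

/-- `[a, b]` is an ST-slack interval: for some `i` with `π(i) ∈ S` and
`π(i+1) ∈ T`, it is `[r (π i), r (π (i+1))]` (here `r (π i) < r (π (i+1))`
holds because the coloring is sorted). -/
def IsSTSlack {n : ℕ} (π : Equiv.Perm (Fin n)) (r : Fin n → ℤ)
    (S T : Finset (Fin n)) (a b : ℤ) : Prop :=
  ∃ (i : ℕ) (h : i + 1 < n),
    π ⟨i, Nat.lt_of_succ_lt h⟩ ∈ S ∧ π ⟨i + 1, h⟩ ∈ T ∧
    a = r (π ⟨i, Nat.lt_of_succ_lt h⟩) ∧ b = r (π ⟨i + 1, h⟩) ∧ a < b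

lemma helper_nc {a₁ b₁ a₂ b₂ : ℤ} {P : Prop} (h1 : a₁ ≤ b₁)
    (hnc : ¬(a₂ ≤ a₁ ∧ b₁ ≤ b₂))
    (d1 : a₁ ≠ a₂) (d2 : a₁ ≠ b₂) (d3 : b₁ ≠ a₂) (d4 : b₁ ≠ b₂) :
    (Set.Icc a₁ b₁ ⊂ Set.Icc a₂ b₂ → P) ∧
    ((¬ Set.Icc a₁ b₁ ⊆ Set.Icc a₂ b₂ ∧ ¬ Set.Icc a₂ b₂ ⊆ Set.Icc a₁ b₁) →
      a₁ ≠ a₂ ∧ a₁ ≠ b₂ ∧ b₁ ≠ a₂ ∧ b₁ ≠ b₂) :=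
  ⟨fun hss => absurd ((Set.Icc_subset_Icc_iff h1).mp hss.subset) hnc,
   fun _ => ⟨d1, d2, d3, d4⟩⟩

lemma helper_pos {a₁ b₁ a₂ b₂ : ℤ} {P Q : Prop} (hp : P)
    (hsub : Set.Icc a₁ b₁ ⊆ Set.Icc a₂ b₂) :
    (Set.Icc a₁ b₁ ⊂ Set.Icc a₂ b₂ → P) ∧
    ((¬ Set.Icc a₁ b₁ ⊆ Set.Icc a₂ b₂ ∧ ¬ Set.Icc a₂ b₂ ⊆ Set.Icc a₁ b₁) → Q) :=
  ⟨fun _ => hp, fun h => absurd hsub h.1⟩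

lemma helper_rev {a₁ b₁ a₂ b₂ : ℤ} {P Q : Prop} (h1 : a₁ ≤ b₁)
    (hnc : ¬(a₂ ≤ a₁ ∧ b₁ ≤ b₂))
    (hsub : Set.Icc a₂ b₂ ⊆ Set.Icc a₁ b₁) :
    (Set.Icc a₁ b₁ ⊂ Set.Icc a₂ b₂ → P) ∧
    ((¬ Set.Icc a₁ b₁ ⊆ Set.Icc a₂ b₂ ∧ ¬ Set.Icc a₂ b₂ ⊆ Set.Icc a₁ b₁) → Q) :=
  ⟨fun hss => absurd ((Set.Icc_subset_Icc_iff h1).mp hss.subset) hnc,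
   fun h => absurd hsub h.2⟩

/-- For two distinct slack intervals `J₁ = [a₁, b₁]` and `J₂ = [a₂, b₂]` of an
interval representation of `π` with a sorted 2-coloring `(S, T)`:
(i) if `J₁ ⊊ J₂`, then `J₁` is a TS-slack interval, `J₂` is an ST-slack
interval, and they share a left or a right endpoint; (ii) if neither contains
the other, then they share no endpoint at all. -/
theorem slack_interval_lemma (n : ℕ) (π : Equiv.Perm (Fin n))
    (ℓ r : Fin n → ℤ) (hrep : IsIntervalRep π ℓ r)
    (S T : Finset (Fin n)) (hunion : S ∪ T = Finset.univ) (hdisj : Disjoint S T)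
    (hsorted : ∀ x y : Fin n, x < y → π.symm y < π.symm x → x ∈ S ∧ y ∈ T)
    (a₁ b₁ a₂ b₂ : ℤ)
    (h₁ : IsTSSlack π r S T a₁ b₁ ∨ IsSTSlack π r S T a₁ b₁)
    (h₂ : IsTSSlack π r S T a₂ b₂ ∨ IsSTSlack π r S T a₂ b₂)
    (hne : (a₁, b₁) ≠ (a₂, b₂)) :
    (Set.Icc a₁ b₁ ⊂ Set.Icc a₂ b₂ →
      IsTSSlack π r S T a₁ b₁ ∧ IsSTSlack π r S T a₂ b₂ ∧
        (a₁ = a₂ ∨ b₁ = b₂)) ∧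
    ((¬ Set.Icc a₁ b₁ ⊆ Set.Icc a₂ b₂ ∧ ¬ Set.Icc a₂ b₂ ⊆ Set.Icc a₁ b₁) →
      a₁ ≠ a₂ ∧ a₁ ≠ b₂ ∧ b₁ ≠ a₂ ∧ b₁ ≠ b₂) := by
  obtain ⟨hℓπ, hℓr, hrmono⟩ := hrep
  have rmono : StrictMono r := fun a b h => hrmono a b h
  have rinj : Function.Injective r := rmono.injective
  have key : ∀ (u v : ℕ) (hu : u < n) (hv : v < n), u < v →
      (π ⟨u, hu⟩ ∈ S ∨ π ⟨v, hv⟩ ∈ T) → r (π ⟨u, hu⟩) < r (π ⟨v, hv⟩) := by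
    intro u v hu hv huv hmem
    rcases lt_trichotomy (π ⟨u, hu⟩) (π ⟨v, hv⟩) with h | h | h
    · exact hrmono _ _ h
    · exact absurd (congrArg Fin.val (π.injective h)) (by simp; omega)
    · have hs := hsorted (π ⟨v, hv⟩) (π ⟨u, hu⟩) h
        (by simp [Fin.lt_def]; omega)
      rcases hmem with hm | hm
      · exact absurd hs.2 (Finset.disjoint_left.mp hdisj hm)
      · exact absurd hm (Finset.disjoint_left.mp hdisj hs.1)
  have kne : ∀ (u v : ℕ) (hu : u < n) (hv : v < n), u ≠ v →
      r (π ⟨u, hu⟩) ≠ r (π ⟨v, hv⟩) := by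
    intro u v hu hv huv he
    exact huv (congrArg Fin.val (π.injective (rinj he)))
  rcases h₁ with ⟨i, hi, hc1a, hc1b, ha1, hb1, hlt1⟩ | ⟨i, hi, hc1a, hc1b, ha1, hb1, hlt1⟩ <;>
    rcases h₂ with ⟨j, hj, hc2a, hc2b, ha2, hb2, hlt2⟩ | ⟨j, hj, hc2a, hc2b, ha2, hb2, hlt2⟩ <;>
    subst ha1 <;> subst hb1 <;> subst ha2 <;> subst hb2
  -- Case TT
  · rcases Nat.lt_trichotomy i j with hij | rfl | hij
    · rcases Nat.eq_or_lt_of_le hij with heq | hij2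
      · subst heq
        exact absurd hc2a (Finset.disjoint_left.mp hdisj hc1b)
      · have k1 : r (π ⟨i+1, hi⟩) < r (π ⟨j+1, hj⟩) :=
          key _ _ _ _ (by omega) (Or.inl hc1b)
        exact helper_nc hlt1.le (fun h => absurd h.1 (not_le.mpr k1))
          (kne _ _ _ _ (by omega)) (kne _ _ _ _ (by omega))
          (kne _ _ _ _ (by omega)) (kne _ _ _ _ (by omega))
    · exact absurd rfl hne
    · rcases Nat.eq_or_lt_of_le hij with heq | hij2
      · subst heq
        exact absurd hc1a (Finset.disjoint_left.mp hdisj hc2b)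
      · have k1 : r (π ⟨j, Nat.lt_of_succ_lt hj⟩) < r (π ⟨i, Nat.lt_of_succ_lt hi⟩) :=
          key _ _ _ _ (by omega) (Or.inr hc1a)
        exact helper_nc hlt1.le (fun h => absurd h.2 (not_le.mpr k1))
          (kne _ _ _ _ (by omega)) (kne _ _ _ _ (by omega))
          (kne _ _ _ _ (by omega)) (kne _ _ _ _ (by omega))
  -- Case TS (h₁ TS at i, h₂ ST at j)
  · rcases Nat.lt_trichotomy i j with hij | rfl | hij
    · rcases Nat.eq_or_lt_of_le hij with heq | hij2
      · subst heq
        have k1 : r (π ⟨i, Nat.lt_of_succ_lt hi⟩) < r (π ⟨i+1+1, hj⟩) :=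
          key _ _ _ _ (by omega) (Or.inr hc2b)
        exact helper_pos ⟨⟨i, hi, hc1a, hc1b, rfl, rfl, hlt1⟩,
          ⟨i+1, hj, hc2a, hc2b, rfl, rfl, hlt2⟩, Or.inl rfl⟩
          (Set.Icc_subset_Icc le_rfl k1.le)
      · have k1 : r (π ⟨i+1, hi⟩) < r (π ⟨j, Nat.lt_of_succ_lt hj⟩) :=
          key _ _ _ _ (by omega) (Or.inl hc1b)
        exact helper_nc hlt1.le (fun h => absurd h.1 (not_le.mpr k1))
          (kne _ _ _ _ (by omega)) (kne _ _ _ _ (by omega))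
          (kne _ _ _ _ (by omega)) (kne _ _ _ _ (by omega))
    · exact absurd hc1a (Finset.disjoint_left.mp hdisj hc2a)
    · rcases Nat.eq_or_lt_of_le hij with heq | hij2
      · subst heq
        have k1 : r (π ⟨j, Nat.lt_of_succ_lt hj⟩) < r (π ⟨j+1+1, hi⟩) :=
          key _ _ _ _ (by omega) (Or.inl hc2a)
        exact helper_pos ⟨⟨j+1, hi, hc1a, hc1b, rfl, rfl, hlt1⟩,
          ⟨j, hj, hc2a, hc2b, rfl, rfl, hlt2⟩, Or.inr rfl⟩
          (Set.Icc_subset_Icc k1.le le_rfl)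
      · have k1 : r (π ⟨j+1, hj⟩) < r (π ⟨i, Nat.lt_of_succ_lt hi⟩) :=
          key _ _ _ _ (by omega) (Or.inr hc1a)
        exact helper_nc hlt1.le (fun h => absurd h.2 (not_le.mpr k1))
          (kne _ _ _ _ (by omega)) (kne _ _ _ _ (by omega))
          (kne _ _ _ _ (by omega)) (kne _ _ _ _ (by omega))
  -- Case ST (h₁ ST at i, h₂ TS at j)
  · rcases Nat.lt_trichotomy i j with hij | rfl | hij
    · rcases Nat.eq_or_lt_of_le hij with heq | hij2
      · subst heq
        have k1 : r (π ⟨i, Nat.lt_of_succ_lt hi⟩) < r (π ⟨i+1+1, hj⟩) :=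
          key _ _ _ _ (by omega) (Or.inl hc1a)
        exact helper_rev hlt1.le (fun h => absurd h.1 (not_le.mpr k1))
          (Set.Icc_subset_Icc k1.le le_rfl)
      · have k1 : r (π ⟨i, Nat.lt_of_succ_lt hi⟩) < r (π ⟨j+1, hj⟩) :=
          key _ _ _ _ (by omega) (Or.inl hc1a)
        exact helper_nc hlt1.le (fun h => absurd h.1 (not_le.mpr k1))
          (kne _ _ _ _ (by omega)) (kne _ _ _ _ (by omega))
          (kne _ _ _ _ (by omega)) (kne _ _ _ _ (by omega))
    · exact absurd hc2a (Finset.disjoint_left.mp hdisj hc1a)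
    · rcases Nat.eq_or_lt_of_le hij with heq | hij2
      · subst heq
        have k1 : r (π ⟨j, Nat.lt_of_succ_lt hj⟩) < r (π ⟨j+1+1, hi⟩) :=
          key _ _ _ _ (by omega) (Or.inr hc1b)
        exact helper_rev hlt1.le (fun h => absurd h.2 (not_le.mpr k1))
          (Set.Icc_subset_Icc le_rfl k1.le)
      · have k1 : r (π ⟨j, Nat.lt_of_succ_lt hj⟩) < r (π ⟨i+1, hi⟩) :=
          key _ _ _ _ (by omega) (Or.inr hc1b)
        exact helper_nc hlt1.le (fun h => absurd h.2 (not_le.mpr k1))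
          (kne _ _ _ _ (by omega)) (kne _ _ _ _ (by omega))
          (kne _ _ _ _ (by omega)) (kne _ _ _ _ (by omega))
  -- Case SS
  · rcases Nat.lt_trichotomy i j with hij | rfl | hij
    · rcases Nat.eq_or_lt_of_le hij with heq | hij2
      · subst heq
        exact absurd hc1b (Finset.disjoint_left.mp hdisj hc2a)
      · have k1 : r (π ⟨i, Nat.lt_of_succ_lt hi⟩) < r (π ⟨j, Nat.lt_of_succ_lt hj⟩) :=
          key _ _ _ _ (by omega) (Or.inl hc1a)
        exact helper_nc hlt1.le (fun h => absurd h.1 (not_le.mpr k1))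
          (kne _ _ _ _ (by omega)) (kne _ _ _ _ (by omega))
          (kne _ _ _ _ (by omega)) (kne _ _ _ _ (by omega))
    · exact absurd rfl hne
    · rcases Nat.eq_or_lt_of_le hij with heq | hij2
      · subst heq
        exact absurd hc2b (Finset.disjoint_left.mp hdisj hc1a)
      · have k1 : r (π ⟨j+1, hj⟩) < r (π ⟨i+1, hi⟩) :=
          key _ _ _ _ (by omega) (Or.inr hc1b)
        exact helper_nc hlt1.le (fun h => absurd h.2 (not_le.mpr k1))
          (kne _ _ _ _ (by omega)) (kne _ _ _ _ (by omega))
          (kne _ _ _ _ (by omega)) (kne _ _ _ _ (by omega))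
end

section
/- For every interval representation {[ℓ_i, r_i] : 1 ≤ i ≤ 6} of the spring poset, it is not the case that both r_2 − ℓ_2 = r_3 − ℓ_3 and r_4 − ℓ_4 = r_5 − ℓ_5. In particular, a feasible 2-count coloring of an interval order cannot contain a spring with elements 2, 3 colored short and 4, 5 colored long. -/
/-- The strict order relation of the spring poset on `{1,…,6}`: the relations
are exactly `1≺4, 4≺3, 3≺6, 1≺3, 1≺6, 4≺6, 2≺3, 2≺6, 1≺5`. -/
def springRel (x y : ℕ) : Prop :=
  ((x, y) : ℕ × ℕ) ∈
    ({(1, 4), (4, 3), (3, 6), (1, 3), (1, 6), (4, 6), (2, 3), (2, 6), (1, 5)} :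
      Set (ℕ × ℕ))

/-- In every interval representation `{[ℓ x, r x] : 1 ≤ x ≤ 6}` of the spring
poset, it is not the case that both `r 2 - ℓ 2 = r 3 - ℓ 3` and
`r 4 - ℓ 4 = r 5 - ℓ 5`; that is, intervals 2, 3 cannot share a common length
while intervals 4, 5 share a common length. -/
theorem spring_not_two_count (ℓ r : ℕ → ℝ)
    (hle : ∀ x ∈ Finset.Icc 1 6, ℓ x ≤ r x)
    (hrep : ∀ x ∈ Finset.Icc 1 6, ∀ y ∈ Finset.Icc 1 6,
      (springRel x y ↔ r x < ℓ y)) :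
    ¬ (r 2 - ℓ 2 = r 3 - ℓ 3 ∧ r 4 - ℓ 4 = r 5 - ℓ 5) := by
  rintro ⟨h23, h45⟩
  have h12 : ¬ r 1 < ℓ 2 := by
    rw [← hrep 1 (by decide) 2 (by decide)]; simp [springRel]
  have h14 : r 1 < ℓ 4 := by
    rw [← hrep 1 (by decide) 4 (by decide)]; simp [springRel]
  have h25 : ¬ r 2 < ℓ 5 := by
    rw [← hrep 2 (by decide) 5 (by decide)]; simp [springRel]
  have h56 : ¬ r 5 < ℓ 6 := by
    rw [← hrep 5 (by decide) 6 (by decide)]; simp [springRel]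
  have h36 : r 3 < ℓ 6 := by
    rw [← hrep 3 (by decide) 6 (by decide)]; simp [springRel]
  have h43 : r 4 < ℓ 3 := by
    rw [← hrep 4 (by decide) 3 (by decide)]; simp [springRel]
  push_neg at h12 h25 h56
  linarith
end

section
/- There do not exist real numbers ℓ_1, …, ℓ_6 and r_1, …, r_6 satisfying ℓ_2 ≤ ℓ_1 < ℓ_4, ℓ_5 ≤ r_2, ℓ_4 ≤ r_2, ℓ_2 ≤ r_1 < ℓ_4 ≤ r_4 < ℓ_3 ≤ r_3 < ℓ_6 ≤ r_5, r_2 − ℓ_2 = r_3 − ℓ_3, and r_4 − ℓ_4 = r_5 − ℓ_5. -/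
/-- There are no real numbers `ℓ₁,…,ℓ₆, r₁,…,r₆` satisfying the endpoint
constraints forced by an interval representation of the spring poset in which
intervals 2 and 3 have a common length and intervals 4 and 5 have a common
length. -/
theorem no_spring_endpoints :
    ¬ ∃ l₁ l₂ l₃ l₄ l₅ l₆ r₁ r₂ r₃ r₄ r₅ r₆ : ℝ,
      l₂ ≤ l₁ ∧ l₁ < l₄ ∧ l₅ ≤ r₂ ∧ l₄ ≤ r₂ ∧
      l₂ ≤ r₁ ∧ r₁ < l₄ ∧ l₄ ≤ r₄ ∧ r₄ < l₃ ∧ l₃ ≤ r₃ ∧ r₃ < l₆ ∧ l₆ ≤ r₅ ∧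
      r₂ - l₂ = r₃ - l₃ ∧ r₄ - l₄ = r₅ - l₅ := by
  rintro ⟨l₁,l₂,l₃,l₄,l₅,l₆,r₁,r₂,r₃,r₄,r₅,r₆,h⟩
  obtain ⟨a,b,c,d,e,f,g,i,j,k,m,n,p⟩ := h
  linarith
end

section
/- Let P be the strict partial order on {1,…,11} defined by x ≺ y if and only if r_x < ℓ_y for the intervals I_1=[0,0], I_2=[1,1], I_3=[3,3], I_4=[0,3], I_5=[6,6], I_6=[3,5], I_7=[5,6], I_8=[0,2], I_9=[2,4], I_10=[4,6], I_11=[2,6]. Then P admits no interval representation using at most 2 distinct interval lengths. -/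
set_option maxHeartbeats 4000000

/-- Left endpoints of the canonical representation of the interval order with
ascent sequence `(0,1,2,0,3,2,3,0,2,4,2)` (element `i+1` ↦ index `i`). -/
def canL : Fin 11 → ℝ := ![0, 1, 3, 0, 6, 3, 5, 0, 2, 4, 2]

/-- Right endpoints of the canonical representation of the interval order with
ascent sequence `(0,1,2,0,3,2,3,0,2,4,2)` (element `i+1` ↦ index `i`). -/
def canR : Fin 11 → ℝ := ![0, 1, 3, 3, 6, 5, 6, 2, 4, 6, 6]

/-- The interval order on `{1,…,11}` given by the intervals
`I₁=[0,0], I₂=[1,1], I₃=[3,3], I₄=[0,3], I₅=[6,6], I₆=[3,5], I₇=[5,6],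
I₈=[0,2], I₉=[2,4], I₁₀=[4,6], I₁₁=[2,6]` (where `x ≺ y` iff `canR x < canL y`)
admits no interval representation using at most 2 distinct interval lengths. -/
theorem ascent_order_not_two_count :
    ¬ ∃ ℓ r : Fin 11 → ℝ, (∀ x, ℓ x ≤ r x) ∧
      (∀ x y, canR x < canL y ↔ r x < ℓ y) ∧
      Set.ncard {d : ℝ | ∃ x : Fin 11, d = r x - ℓ x} ≤ 2 := by
  rintro ⟨l, r, hlr, hiff, hcard⟩
  have fwd : ∀ x y, canR x < canL y → r x < l y := fun x y h => (hiff x y).1 h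
  have inc : ∀ x y, ¬ canR x < canL y → l y ≤ r x :=
    fun x y h => le_of_not_gt (fun hc => h ((hiff x y).2 hc))
  have c0_1 : r 0 < l 1 := fwd 0 1 (by show (0:ℝ) < 1; norm_num)
  have c0_2 : r 0 < l 2 := fwd 0 2 (by show (0:ℝ) < 3; norm_num)
  have i0_3 : l 3 ≤ r 0 := inc 0 3 (by show ¬(0:ℝ) < 0; norm_num)
  have c0_4 : r 0 < l 4 := fwd 0 4 (by show (0:ℝ) < 6; norm_num)
  have c0_5 : r 0 < l 5 := fwd 0 5 (by show (0:ℝ) < 3; norm_num)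
  have c0_6 : r 0 < l 6 := fwd 0 6 (by show (0:ℝ) < 5; norm_num)
  have i0_7 : l 7 ≤ r 0 := inc 0 7 (by show ¬(0:ℝ) < 0; norm_num)
  have c0_8 : r 0 < l 8 := fwd 0 8 (by show (0:ℝ) < 2; norm_num)
  have c0_9 : r 0 < l 9 := fwd 0 9 (by show (0:ℝ) < 4; norm_num)
  have c0_10 : r 0 < l 10 := fwd 0 10 (by show (0:ℝ) < 2; norm_num)
  have c1_2 : r 1 < l 2 := fwd 1 2 (by show (1:ℝ) < 3; norm_num)
  have i1_3 : l 3 ≤ r 1 := inc 1 3 (by show ¬(1:ℝ) < 0; norm_num)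
  have c1_4 : r 1 < l 4 := fwd 1 4 (by show (1:ℝ) < 6; norm_num)
  have c1_5 : r 1 < l 5 := fwd 1 5 (by show (1:ℝ) < 3; norm_num)
  have c1_6 : r 1 < l 6 := fwd 1 6 (by show (1:ℝ) < 5; norm_num)
  have i1_7 : l 7 ≤ r 1 := inc 1 7 (by show ¬(1:ℝ) < 0; norm_num)
  have c1_8 : r 1 < l 8 := fwd 1 8 (by show (1:ℝ) < 2; norm_num)
  have c1_9 : r 1 < l 9 := fwd 1 9 (by show (1:ℝ) < 4; norm_num)
  have c1_10 : r 1 < l 10 := fwd 1 10 (by show (1:ℝ) < 2; norm_num)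
  have i2_3 : l 3 ≤ r 2 := inc 2 3 (by show ¬(3:ℝ) < 0; norm_num)
  have c2_4 : r 2 < l 4 := fwd 2 4 (by show (3:ℝ) < 6; norm_num)
  have i2_5 : l 5 ≤ r 2 := inc 2 5 (by show ¬(3:ℝ) < 3; norm_num)
  have c2_6 : r 2 < l 6 := fwd 2 6 (by show (3:ℝ) < 5; norm_num)
  have i2_8 : l 8 ≤ r 2 := inc 2 8 (by show ¬(3:ℝ) < 2; norm_num)
  have c2_9 : r 2 < l 9 := fwd 2 9 (by show (3:ℝ) < 4; norm_num)
  have i2_10 : l 10 ≤ r 2 := inc 2 10 (by show ¬(3:ℝ) < 2; norm_num)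
  have i3_0 : l 0 ≤ r 3 := inc 3 0 (by show ¬(3:ℝ) < 0; norm_num)
  have i3_1 : l 1 ≤ r 3 := inc 3 1 (by show ¬(3:ℝ) < 1; norm_num)
  have i3_2 : l 2 ≤ r 3 := inc 3 2 (by show ¬(3:ℝ) < 3; norm_num)
  have c3_4 : r 3 < l 4 := fwd 3 4 (by show (3:ℝ) < 6; norm_num)
  have i3_5 : l 5 ≤ r 3 := inc 3 5 (by show ¬(3:ℝ) < 3; norm_num)
  have c3_6 : r 3 < l 6 := fwd 3 6 (by show (3:ℝ) < 5; norm_num)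
  have i3_7 : l 7 ≤ r 3 := inc 3 7 (by show ¬(3:ℝ) < 0; norm_num)
  have i3_8 : l 8 ≤ r 3 := inc 3 8 (by show ¬(3:ℝ) < 2; norm_num)
  have c3_9 : r 3 < l 9 := fwd 3 9 (by show (3:ℝ) < 4; norm_num)
  have i3_10 : l 10 ≤ r 3 := inc 3 10 (by show ¬(3:ℝ) < 2; norm_num)
  have i4_6 : l 6 ≤ r 4 := inc 4 6 (by show ¬(6:ℝ) < 5; norm_num)
  have i4_9 : l 9 ≤ r 4 := inc 4 9 (by show ¬(6:ℝ) < 4; norm_num)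
  have i4_10 : l 10 ≤ r 4 := inc 4 10 (by show ¬(6:ℝ) < 2; norm_num)
  have i5_2 : l 2 ≤ r 5 := inc 5 2 (by show ¬(5:ℝ) < 3; norm_num)
  have i5_3 : l 3 ≤ r 5 := inc 5 3 (by show ¬(5:ℝ) < 0; norm_num)
  have c5_4 : r 5 < l 4 := fwd 5 4 (by show (5:ℝ) < 6; norm_num)
  have i5_6 : l 6 ≤ r 5 := inc 5 6 (by show ¬(5:ℝ) < 5; norm_num)
  have i5_8 : l 8 ≤ r 5 := inc 5 8 (by show ¬(5:ℝ) < 2; norm_num)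
  have i5_9 : l 9 ≤ r 5 := inc 5 9 (by show ¬(5:ℝ) < 4; norm_num)
  have i5_10 : l 10 ≤ r 5 := inc 5 10 (by show ¬(5:ℝ) < 2; norm_num)
  have i6_4 : l 4 ≤ r 6 := inc 6 4 (by show ¬(6:ℝ) < 6; norm_num)
  have i6_5 : l 5 ≤ r 6 := inc 6 5 (by show ¬(6:ℝ) < 3; norm_num)
  have i6_9 : l 9 ≤ r 6 := inc 6 9 (by show ¬(6:ℝ) < 4; norm_num)
  have i6_10 : l 10 ≤ r 6 := inc 6 10 (by show ¬(6:ℝ) < 2; norm_num)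
  have i7_0 : l 0 ≤ r 7 := inc 7 0 (by show ¬(2:ℝ) < 0; norm_num)
  have i7_1 : l 1 ≤ r 7 := inc 7 1 (by show ¬(2:ℝ) < 1; norm_num)
  have c7_2 : r 7 < l 2 := fwd 7 2 (by show (2:ℝ) < 3; norm_num)
  have i7_3 : l 3 ≤ r 7 := inc 7 3 (by show ¬(2:ℝ) < 0; norm_num)
  have c7_4 : r 7 < l 4 := fwd 7 4 (by show (2:ℝ) < 6; norm_num)
  have c7_5 : r 7 < l 5 := fwd 7 5 (by show (2:ℝ) < 3; norm_num)
  have c7_6 : r 7 < l 6 := fwd 7 6 (by show (2:ℝ) < 5; norm_num)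
  have i7_8 : l 8 ≤ r 7 := inc 7 8 (by show ¬(2:ℝ) < 2; norm_num)
  have c7_9 : r 7 < l 9 := fwd 7 9 (by show (2:ℝ) < 4; norm_num)
  have i7_10 : l 10 ≤ r 7 := inc 7 10 (by show ¬(2:ℝ) < 2; norm_num)
  have i8_2 : l 2 ≤ r 8 := inc 8 2 (by show ¬(4:ℝ) < 3; norm_num)
  have i8_3 : l 3 ≤ r 8 := inc 8 3 (by show ¬(4:ℝ) < 0; norm_num)
  have c8_4 : r 8 < l 4 := fwd 8 4 (by show (4:ℝ) < 6; norm_num)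
  have i8_5 : l 5 ≤ r 8 := inc 8 5 (by show ¬(4:ℝ) < 3; norm_num)
  have c8_6 : r 8 < l 6 := fwd 8 6 (by show (4:ℝ) < 5; norm_num)
  have i8_7 : l 7 ≤ r 8 := inc 8 7 (by show ¬(4:ℝ) < 0; norm_num)
  have i8_9 : l 9 ≤ r 8 := inc 8 9 (by show ¬(4:ℝ) < 4; norm_num)
  have i8_10 : l 10 ≤ r 8 := inc 8 10 (by show ¬(4:ℝ) < 2; norm_num)
  have i9_4 : l 4 ≤ r 9 := inc 9 4 (by show ¬(6:ℝ) < 6; norm_num)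
  have i9_5 : l 5 ≤ r 9 := inc 9 5 (by show ¬(6:ℝ) < 3; norm_num)
  have i9_6 : l 6 ≤ r 9 := inc 9 6 (by show ¬(6:ℝ) < 5; norm_num)
  have i9_8 : l 8 ≤ r 9 := inc 9 8 (by show ¬(6:ℝ) < 2; norm_num)
  have i9_10 : l 10 ≤ r 9 := inc 9 10 (by show ¬(6:ℝ) < 2; norm_num)
  have i10_2 : l 2 ≤ r 10 := inc 10 2 (by show ¬(6:ℝ) < 3; norm_num)
  have i10_3 : l 3 ≤ r 10 := inc 10 3 (by show ¬(6:ℝ) < 0; norm_num)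
  have i10_4 : l 4 ≤ r 10 := inc 10 4 (by show ¬(6:ℝ) < 6; norm_num)
  have i10_5 : l 5 ≤ r 10 := inc 10 5 (by show ¬(6:ℝ) < 3; norm_num)
  have i10_6 : l 6 ≤ r 10 := inc 10 6 (by show ¬(6:ℝ) < 5; norm_num)
  have i10_7 : l 7 ≤ r 10 := inc 10 7 (by show ¬(6:ℝ) < 0; norm_num)
  have i10_8 : l 8 ≤ r 10 := inc 10 8 (by show ¬(6:ℝ) < 2; norm_num)
  have i10_9 : l 9 ≤ r 10 := inc 10 9 (by show ¬(6:ℝ) < 4; norm_num)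
  have g0 : l 0 ≤ r 0 := hlr 0
  have g1 : l 1 ≤ r 1 := hlr 1
  have g2 : l 2 ≤ r 2 := hlr 2
  have g3 : l 3 ≤ r 3 := hlr 3
  have g4 : l 4 ≤ r 4 := hlr 4
  have g5 : l 5 ≤ r 5 := hlr 5
  have g6 : l 6 ≤ r 6 := hlr 6
  have g7 : l 7 ≤ r 7 := hlr 7
  have g8 : l 8 ≤ r 8 := hlr 8
  have g9 : l 9 ≤ r 9 := hlr 9
  have g10 : l 10 ≤ r 10 := hlr 10
  have hfin : {d : ℝ | ∃ x : Fin 11, d = r x - l x}.Finite := by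
    have hsub : {d : ℝ | ∃ x : Fin 11, d = r x - l x} ⊆
        Set.range (fun x : Fin 11 => r x - l x) := by
      rintro d ⟨x, rfl⟩; exact ⟨x, rfl⟩
    exact (Set.finite_range _).subset hsub
  have key : ∃ p q : ℝ, ∀ x : Fin 11, r x - l x = p ∨ r x - l x = q := by
    by_cases hall : ∀ x : Fin 11, r x - l x = r 0 - l 0
    · exact ⟨r 0 - l 0, r 0 - l 0, fun x => Or.inl (hall x)⟩
    · push_neg at hall
      obtain ⟨x0, hx0⟩ := hall
      refine ⟨r 0 - l 0, r x0 - l x0, fun x => ?_⟩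
      by_contra hx
      push_neg at hx
      obtain ⟨h1, h2⟩ := hx
      have hsub : ({r 0 - l 0, r x0 - l x0, r x - l x} : Set ℝ) ⊆
          {d : ℝ | ∃ x : Fin 11, d = r x - l x} := by
        rintro d (rfl | rfl | rfl)
        · exact ⟨0, rfl⟩
        · exact ⟨x0, rfl⟩
        · exact ⟨x, rfl⟩
      have hnm : (r 0 - l 0) ∉ ({r x0 - l x0, r x - l x} : Set ℝ) := by
        simp only [Set.mem_insert_iff, Set.mem_singleton_iff]
        push_neg
        exact ⟨fun h => hx0 h.symm, fun h => h1 h.symm⟩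
      have hbc : r x0 - l x0 ≠ r x - l x := fun h => h2 h.symm
      have h3 : ({r 0 - l 0, r x0 - l x0, r x - l x} : Set ℝ).ncard = 3 := by
        rw [Set.ncard_insert_of_notMem hnm, Set.ncard_pair hbc]
      have hle := Set.ncard_le_ncard hsub hfin
      omega
  obtain ⟨p, q, hpq⟩ := key
  rcases hpq 2 with h2 | h2 <;> rcases hpq 8 with h8 | h8 <;>
    rcases hpq 10 with hA | hA <;> rcases hpq 5 with h5 | h5 <;>
    rcases hpq 1 with h1 | h1 <;> rcases hpq 3 with h3 | h3 <;>
    first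
    | linarith
    | (rcases hpq 0 with h0 | h0 <;> rcases hpq 4 with h4 | h4 <;>
        rcases hpq 6 with h6 | h6 <;> rcases hpq 7 with h7 | h7 <;>
        rcases hpq 9 with h9 | h9 <;> linarith)
end

section
/- The permutation π = [4, 2, 5, 10, 3, 1, 7, 6, 9, 8] of {1,…,10} (that is, π(1)=4, π(2)=2, π(3)=5, π(4)=10, π(5)=3, π(6)=1, π(7)=7, π(8)=6, π(9)=9, π(10)=8) admits no interval representation using at most 3 distinct interval lengths. -/
/-- The permutation `[4, 2, 5, 10, 3, 1, 7, 6, 9, 8]` of `{1,…,10}` (written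
0-indexed: `i ↦ ![3,1,4,9,2,0,6,5,8,7] i`) admits no interval representation
using at most 3 distinct interval lengths. -/
theorem specific_permutation_not_three_count (π : Equiv.Perm (Fin 10))
    (hπ : ∀ i : Fin 10, π i = ![3, 1, 4, 9, 2, 0, 6, 5, 8, 7] i) :
    ¬ ∃ ℓ r : Fin 10 → ℤ, IsIntervalRep π ℓ r ∧
      (Finset.image (fun j => r j - ℓ j) Finset.univ).card ≤ 3 := by
  rintro ⟨ℓ, r, ⟨h1, h2, h3⟩, hcard⟩
  -- left-endpoint order: ℓ 3 < ℓ 1 < ℓ 4 < ℓ 9 < ℓ 2 < ℓ 0 < ℓ 6 < ℓ 5 < ℓ 8 < ℓ 7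
  have L0 : ℓ 3 < ℓ 1 := by simpa [hπ] using h1 0 1 (by decide)
  have L1 : ℓ 1 < ℓ 4 := by simpa [hπ] using h1 1 2 (by decide)
  have L2 : ℓ 4 < ℓ 9 := by simpa [hπ] using h1 2 3 (by decide)
  have L3 : ℓ 9 < ℓ 2 := by simpa [hπ] using h1 3 4 (by decide)
  have L4 : ℓ 2 < ℓ 0 := by simpa [hπ] using h1 4 5 (by decide)
  have L5 : ℓ 0 < ℓ 6 := by simpa [hπ] using h1 5 6 (by decide)
  have L6 : ℓ 6 < ℓ 5 := by simpa [hπ] using h1 6 7 (by decide)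
  have L7 : ℓ 5 < ℓ 8 := by simpa [hπ] using h1 7 8 (by decide)
  have L8 : ℓ 8 < ℓ 7 := by simpa [hπ] using h1 8 9 (by decide)
  -- right-endpoint order
  have R0 : r 0 < r 1 := h3 0 1 (by decide)
  have R1 : r 1 < r 2 := h3 1 2 (by decide)
  have R2 : r 2 < r 3 := h3 2 3 (by decide)
  have R3 : r 3 < r 4 := h3 3 4 (by decide)
  have R4 : r 4 < r 5 := h3 4 5 (by decide)
  have R5 : r 5 < r 6 := h3 5 6 (by decide)
  have R6 : r 6 < r 7 := h3 6 7 (by decide)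
  have R7 : r 7 < r 8 := h3 7 8 (by decide)
  have R8 : r 8 < r 9 := h3 8 9 (by decide)
  have M : ℓ 7 < r 0 := h2 7 0
  -- the three distinct lengths
  have hd02 : r 0 - ℓ 0 < r 2 - ℓ 2 := by omega
  have hd24 : r 2 - ℓ 2 < r 4 - ℓ 4 := by omega
  -- every length is one of these three
  have key : ∀ j : Fin 10, r j - ℓ j = r 0 - ℓ 0 ∨ r j - ℓ j = r 2 - ℓ 2 ∨
      r j - ℓ j = r 4 - ℓ 4 := by
    intro j
    have hsub : ({r 0 - ℓ 0, r 2 - ℓ 2, r 4 - ℓ 4} : Finset ℤ) ⊆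
        Finset.image (fun j => r j - ℓ j) Finset.univ := by
      intro x hx
      simp only [Finset.mem_insert, Finset.mem_singleton] at hx
      rcases hx with h | h | h
      · exact h ▸ Finset.mem_image_of_mem _ (Finset.mem_univ (0 : Fin 10))
      · exact h ▸ Finset.mem_image_of_mem _ (Finset.mem_univ (2 : Fin 10))
      · exact h ▸ Finset.mem_image_of_mem _ (Finset.mem_univ (4 : Fin 10))
    have hc3 : ({r 0 - ℓ 0, r 2 - ℓ 2, r 4 - ℓ 4} : Finset ℤ).card = 3 := by
      rw [Finset.card_insert_of_notMem (by simp; omega),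
        Finset.card_insert_of_notMem (by simp; omega), Finset.card_singleton]
    have heq := Finset.eq_of_subset_of_card_le hsub (by omega)
    have hmem : r j - ℓ j ∈ Finset.image (fun j => r j - ℓ j) Finset.univ :=
      Finset.mem_image_of_mem _ (Finset.mem_univ j)
    rw [← heq] at hmem
    simpa using hmem
  -- pin down each length
  have p9 : r 9 - ℓ 9 = r 4 - ℓ 4 := by
    rcases key 9 with h | h | h <;> omega
  have p3 : r 3 - ℓ 3 = r 4 - ℓ 4 := by
    rcases key 3 with h | h | h <;> omega
  have p87 : r 8 - ℓ 8 = r 2 - ℓ 2 ∧ r 7 - ℓ 7 = r 0 - ℓ 0 := by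
    rcases key 8 with h8 | h8 | h8 <;> rcases key 7 with h7 | h7 | h7 <;> omega
  have p65 : r 6 - ℓ 6 = r 2 - ℓ 2 ∧ r 5 - ℓ 5 = r 0 - ℓ 0 := by
    rcases key 6 with h6 | h6 | h6 <;> rcases key 5 with h5 | h5 | h5 <;> omega
  have p1 : r 1 - ℓ 1 = r 2 - ℓ 2 := by
    rcases key 1 with h | h | h <;> omega
  obtain ⟨p8, p7⟩ := p87
  obtain ⟨p6, p5⟩ := p65
  omega
end

section
/- There exists a permutation of {1,…,10} whose longest strictly decreasing subsequence has length exactly 3 but which admits no interval representation using at most 3 distinct interval lengths. (Hence, for k = 3, having depth at most k does not imply the existence of a k-count interval representation.) -/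
def myPerm : Equiv.Perm (Fin 10) :=
  ⟨![2,1,4,3,9,0,7,5,8,6], ![5,1,0,3,2,7,9,6,8,4], by decide, by decide⟩

def chain : Fin 10 → Fin 3 := ![0,1,0,1,0,2,1,2,1,2]

lemma chain_mono : ∀ a b : Fin 10, a < b → chain a = chain b → myPerm a < myPerm b := by
  decide

/-- There is a permutation of `{1,…,10}` whose longest strictly decreasing
subsequence has length exactly 3 (it has one of length 3 but none of length 4)
yet which admits no interval representation with at most 3 distinct interval
lengths. -/
theorem exists_depth_three_not_three_count :
    ∃ π : Equiv.Perm (Fin 10),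
      (∃ f : Fin 3 → Fin 10, StrictMono f ∧
        ∀ i j : Fin 3, i < j → π (f j) < π (f i)) ∧
      (¬ ∃ f : Fin 4 → Fin 10, StrictMono f ∧
        ∀ i j : Fin 4, i < j → π (f j) < π (f i)) ∧
      ¬ ∃ ℓ r : Fin 10 → ℤ, IsIntervalRep π ℓ r ∧
        (Finset.image (fun j => r j - ℓ j) Finset.univ).card ≤ 3 := by
  refine ⟨myPerm, ⟨![4,6,9], by decide, by decide⟩, ?_, ?_⟩
  · rintro ⟨f, hf, hd⟩
    obtain ⟨i, j, hij, hc⟩ :=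
      Fintype.exists_ne_map_eq_of_card_lt (fun i => chain (f i)) (by simp)
    rcases lt_or_gt_of_ne hij with h | h
    · exact absurd (chain_mono _ _ (hf h) hc) (not_lt.mpr (le_of_lt (hd i j h)))
    · exact absurd (chain_mono _ _ (hf h) hc.symm) (not_lt.mpr (le_of_lt (hd j i h)))
  · rintro ⟨ℓ, r, ⟨h1, -, h3⟩, hcard⟩
    have L0 : ℓ 2 < ℓ 1 := h1 0 1 (by decide)
    have L1 : ℓ 1 < ℓ 4 := h1 1 2 (by decide)
    have L2 : ℓ 4 < ℓ 3 := h1 2 3 (by decide)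
    have L3 : ℓ 3 < ℓ 9 := h1 3 4 (by decide)
    have L4 : ℓ 9 < ℓ 0 := h1 4 5 (by decide)
    have L5 : ℓ 0 < ℓ 7 := h1 5 6 (by decide)
    have L6 : ℓ 7 < ℓ 5 := h1 6 7 (by decide)
    have L7 : ℓ 5 < ℓ 8 := h1 7 8 (by decide)
    have L8 : ℓ 8 < ℓ 6 := h1 8 9 (by decide)
    have R0 : r 0 < r 1 := h3 0 1 (by decide)
    have R1 : r 1 < r 2 := h3 1 2 (by decide)
    have R2 : r 2 < r 3 := h3 2 3 (by decide)
    have R3 : r 3 < r 4 := h3 3 4 (by decide)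
    have R4 : r 4 < r 5 := h3 4 5 (by decide)
    have R5 : r 5 < r 6 := h3 5 6 (by decide)
    have R6 : r 6 < r 7 := h3 6 7 (by decide)
    have R7 : r 7 < r 8 := h3 7 8 (by decide)
    have R8 : r 8 < r 9 := h3 8 9 (by decide)
    set S := Finset.image (fun j => r j - ℓ j) Finset.univ with hSdef
    have hmem : ∀ j : Fin 10, r j - ℓ j ∈ S :=
      fun j => Finset.mem_image_of_mem _ (Finset.mem_univ j)
    have hT3 : ({r 0 - ℓ 0, r 1 - ℓ 1, r 2 - ℓ 2} : Finset ℤ).card = 3 :=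
      Finset.card_eq_three.mpr ⟨_, _, _, by omega, by omega, by omega, rfl⟩
    have hTS : ({r 0 - ℓ 0, r 1 - ℓ 1, r 2 - ℓ 2} : Finset ℤ) ⊆ S := by
      intro x hx
      simp only [Finset.mem_insert, Finset.mem_singleton] at hx
      rcases hx with rfl | rfl | rfl <;> exact hmem _
    have hcard2 : S.card ≤ ({r 0 - ℓ 0, r 1 - ℓ 1, r 2 - ℓ 2} : Finset ℤ).card := by
      rw [hT3]; exact hcard
    have hS : S = ({r 0 - ℓ 0, r 1 - ℓ 1, r 2 - ℓ 2} : Finset ℤ) :=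
      (Finset.eq_of_subset_of_card_le hTS hcard2).symm
    have hall : ∀ j : Fin 10,
        r j - ℓ j = r 0 - ℓ 0 ∨ r j - ℓ j = r 1 - ℓ 1 ∨ r j - ℓ j = r 2 - ℓ 2 := by
      intro j
      have := hmem j
      rw [hS] at this
      simpa using this
    have m3 := hall 3
    have m4 := hall 4
    have m5 := hall 5
    have m6 := hall 6
    have m7 := hall 7
    have m8 := hall 8
    have m9 := hall 9
    omega
end

section
/- There do not exist real numbers ℓ_1, ℓ_2, ℓ_5, ℓ_6, ℓ_9, ℓ_10 and r_1, r_2, r_5, r_6, r_9, r_10 satisfying ℓ_2 < ℓ_5 < ℓ_10 < ℓ_1 < ℓ_6 < ℓ_9, r_1 < r_2 < r_5 < r_6 < r_9 < r_10, ℓ_6 − ℓ_1 = r_6 − r_1, ℓ_9 − ℓ_2 = r_9 − r_2, and ℓ_10 − ℓ_5 = r_10 − r_5. (Consequently, the sorted 3-coloring T_1 = {1,6}, T_2 = {2,9}, T_3 = {5,10} of the permutation [2, 5, 10, 1, 6, 9] is infeasible.) -/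
/-- There are no real numbers `ℓ₁, ℓ₂, ℓ₅, ℓ₆, ℓ₉, ℓ₁₀` and
`r₁, r₂, r₅, r₆, r₉, r₁₀` realizing the endpoint orderings forced by an
interval representation of the permutation `[2, 5, 10, 1, 6, 9]` in which the
intervals `1` and `6` have equal length, the intervals `2` and `9` have equal
length, and the intervals `5` and `10` have equal length. -/
theorem infeasible_sorted_three_coloring :
    ¬ ∃ l₁ l₂ l₅ l₆ l₉ l₁₀ r₁ r₂ r₅ r₆ r₉ r₁₀ : ℝ,
      l₂ < l₅ ∧ l₅ < l₁₀ ∧ l₁₀ < l₁ ∧ l₁ < l₆ ∧ l₆ < l₉ ∧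
      r₁ < r₂ ∧ r₂ < r₅ ∧ r₅ < r₆ ∧ r₆ < r₉ ∧ r₉ < r₁₀ ∧
      l₆ - l₁ = r₆ - r₁ ∧ l₉ - l₂ = r₉ - r₂ ∧ l₁₀ - l₅ = r₁₀ - r₅ := by
  rintro ⟨l₁, l₂, l₅, l₆, l₉, l₁₀, r₁, r₂, r₅, r₆, r₉, r₁₀,
    h1, h2, h3, h4, h5, h6, h7, h8, h9, h10, e1, e2, e3⟩
  linarith
end
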